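/- arXiv:0810.5615 — 7 statements merged into one kernel-verified Lean document; each statement's English description precedes it below -/
import Mathlib

section
/- Let n ≥ 2 and let G(n) be the group presented by generators x_1,…,x_{3n} and relations R_orig(n). Then in G(n), the images of the generators satisfy x_i x_j = x_j x_i for all 1 ≤ i ≤ n and n+1 ≤ j ≤ 2n−1. -/
/-- The descending product `X b * X (b-1) * ⋯ * X a` (equal to `1` when `b < a`). -/
def dprod {G : Type*} [Monoid G] (X : ℕ → G) (a b : ℕ) : G :=
  (((List.range' a (b + 1 - a)).reverse).map X).prod

/-- The set of relators expressing the cyclic system of relations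
`[a₁, …, a_k]`, i.e. that all cyclic rotations of the product `a_k ⋯ a₁` are equal. -/
def cycRels {G : Type*} [Group G] (l : List G) : Set G :=
  { r | ∃ k : ℕ, r = (l.rotate k).reverse.prod * (l.reverse.prod)⁻¹ }

/-- The cyclic system of relations `[a₁, …, a_k]` holds in a group:
all cyclic rotations of the product `a_k ⋯ a₁` are equal. -/
def cycHolds {G : Type*} [Group G] (l : List G) : Prop :=
  ∀ k : ℕ, (l.rotate k).reverse.prod = l.reverse.prod

/-- The `i`-th (1-based) generator of the free group on `Fin N`. -/
def gen (N : ℕ) (i : ℕ) : FreeGroup (Fin N) :=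
  if h : 0 < N then FreeGroup.of ⟨(i - 1) % N, Nat.mod_lt _ h⟩ else 1

/-- The relation set `R_orig(n)` on the generators `x₁, …, x₃ₙ`. -/
def Rorig (n : ℕ) : Set (FreeGroup (Fin (3 * n))) :=
  let X : ℕ → FreeGroup (Fin (3 * n)) := gen (3 * n)
  (⋃ i ∈ Set.Icc 1 n, ⋃ j ∈ Set.Icc (n + 1) (2 * n - 1),
      cycRels [X i, (dprod X (n + 1) (j - 1))⁻¹ * X j * dprod X (n + 1) (j - 1)]) ∪
  cycRels ((List.range' 1 n).map X ++
      [(dprod X (n + 1) (2 * n - 1))⁻¹ * X (2 * n) * dprod X (n + 1) (2 * n - 1)]) ∪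
  cycRels ((dprod X 2 (2 * n) * X 1 * (dprod X 2 (2 * n))⁻¹) ::
      (List.range' (2 * n + 1) n).map X) ∪
  (⋃ i ∈ Set.Icc 2 n, ⋃ j ∈ Set.Icc (2 * n + 1) (3 * n),
      cycRels [dprod X (i + 1) (2 * n) * X i * (dprod X (i + 1) (2 * n))⁻¹, X j]) ∪
  (⋃ i ∈ Set.Icc (n + 1) (2 * n), ⋃ j ∈ Set.Icc (2 * n + 2) (3 * n), cycRels [X i, X j]) ∪
  cycRels ((List.range' (n + 1) n).map X ++ [X (2 * n + 1)])

/-- The image of the `i`-th (1-based) generator `xᵢ` in the presented group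
`G(n) = ⟨x₁,…,x₃ₙ ∣ R_orig(n)⟩`. -/
def genG (n : ℕ) (i : ℕ) : PresentedGroup (Rorig n) :=
  PresentedGroup.mk (Rorig n) (gen (3 * n) i)


lemma mk_rel_eq_one {α : Type*} {rels : Set (FreeGroup α)} {r : FreeGroup α} (hr : r ∈ rels) :
    PresentedGroup.mk rels r = 1 :=
  (QuotientGroup.eq_one_iff r).2 (Subgroup.subset_normalClosure hr)

/-- In `G(n) = ⟨x₁,…,x₃ₙ ∣ R_orig(n)⟩`, the generators `xᵢ` and `xⱼ` commute for all
`1 ≤ i ≤ n` and `n+1 ≤ j ≤ 2n-1`. -/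
theorem commute_in_Gn (n : ℕ) (hn : 2 ≤ n) (i j : ℕ) (hi : 1 ≤ i ∧ i ≤ n)
    (hj : n + 1 ≤ j ∧ j ≤ 2 * n - 1) :
    genG n i * genG n j = genG n j * genG n i := by
  obtain ⟨hi1, hi2⟩ := hi
  suffices h : ∀ j, n + 1 ≤ j → j ≤ 2 * n - 1 → Commute (genG n i) (genG n j) from
    h j hj.1 hj.2
  intro j
  induction j using Nat.strong_induction_on with
  | _ j ih =>
    intro hj1 hj2
    set X : ℕ → FreeGroup (Fin (3 * n)) := gen (3 * n) with hX
    set d : FreeGroup (Fin (3 * n)) := dprod X (n + 1) (j - 1) with hd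
    have hdcomm : Commute (genG n i) (PresentedGroup.mk (Rorig n) d) := by
      rw [hd]
      unfold dprod
      rw [map_list_prod]
      apply Commute.list_prod_right
      intro y hy
      simp only [List.map_map, List.mem_map, List.mem_reverse, List.mem_range'_1] at hy
      obtain ⟨m, ⟨hm1, hm2⟩, rfl⟩ := hy
      exact ih m (by omega) (by omega) (by omega)
    have hrel : X i * (d⁻¹ * X j * d) * (d⁻¹ * X j * d * X i)⁻¹ ∈ Rorig n := by
      rw [Rorig]
      left; left; left; left; left
      simp only [Set.mem_iUnion, Set.mem_Icc]
      exact ⟨i, ⟨hi1, hi2⟩, j, ⟨hj1, hj2⟩, 1, by simp [List.rotate]; rfl⟩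
    have h0 := mk_rel_eq_one hrel
    simp only [map_mul, map_inv] at h0
    have h1 : Commute (genG n i)
        ((PresentedGroup.mk (Rorig n) d)⁻¹ * genG n j * PresentedGroup.mk (Rorig n) d) := by
      unfold Commute SemiconjBy genG
      have := mul_eq_one_iff_eq_inv.mp h0
      rw [this]
      group
      rfl
    have h2 := hdcomm.mul_right (h1.mul_right hdcomm.inv_right)
    have key : PresentedGroup.mk (Rorig n) d *
        ((PresentedGroup.mk (Rorig n) d)⁻¹ * genG n j * PresentedGroup.mk (Rorig n) d *
        (PresentedGroup.mk (Rorig n) d)⁻¹) = genG n j := by group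
    rw [key] at h2
    exact h2
end

section
/- Let n ≥ 2 and let G(n) be the group presented by generators x_1,…,x_{3n} and relations R_orig(n). Then in G(n) the cyclic relation [x_1, x_2, …, x_n, x_{2n}] holds, i.e. x_{2n} x_n ⋯ x_1 = x_1 x_{2n} x_n ⋯ x_2 = ⋯ = x_n ⋯ x_1 x_{2n}. -/
section Aux

variable {F G : Type*} [Group F] [Group G]

lemma map_revprod (f : F →* G) (l : List F) :
    (l.map f).reverse.prod = f l.reverse.prod := by
  rw [← List.map_reverse, ← map_list_prod]

lemma cycHolds_map (f : F →* G) (l : List F) (h : ∀ r ∈ cycRels l, f r = 1) :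
    cycHolds (l.map f) := by
  intro k
  have h1 := h _ ⟨k, rfl⟩
  rw [map_mul, map_inv, mul_inv_eq_one] at h1
  rw [← List.map_rotate, map_revprod, map_revprod, h1]

lemma commute_of_cycHolds_pair (a b : G) (h : cycHolds [a, b]) : Commute a b := by
  have h1 := h 1
  simpa [List.rotate, Commute, SemiconjBy] using h1

lemma map_dprod (f : F →* G) (X : ℕ → F) (a b : ℕ) :
    f (dprod X a b) = dprod (fun i => f (X i)) a b := by
  simp [dprod, map_list_prod, List.map_map, Function.comp_def]

lemma dprod_succ (X : ℕ → G) (a b : ℕ) (h : a ≤ b + 1) :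
    dprod X a (b + 1) = X (b + 1) * dprod X a b := by
  unfold dprod
  have h1 : b + 1 + 1 - a = (b + 1 - a) + 1 := by omega
  have h2 : a + (b + 1 - a) = b + 1 := by omega
  rw [h1, List.range'_concat]
  simp [h2]

lemma rotProd_eq (A : List G) (w : G) (k : ℕ) (hk : k ≤ A.length) :
    ((A ++ [w]).rotate k).reverse.prod
      = (A.take k).reverse.prod * w * (A.drop k).reverse.prod := by
  rw [List.rotate_eq_drop_append_take (by simp; omega)]
  have hdrop : (A ++ [w]).drop k = A.drop k ++ [w] := by
    rw [List.drop_append, Nat.sub_eq_zero_of_le (by simpa using hk)]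
    simp
  have htake : (A ++ [w]).take k = A.take k := by
    rw [List.take_append, Nat.sub_eq_zero_of_le (by simpa using hk)]
    simp
  rw [hdrop, htake]
  simp [mul_assoc]

lemma cycHolds_conj (A : List G) (z d : G) (hc : ∀ a ∈ A, Commute d a)
    (h : cycHolds (A ++ [d⁻¹ * z * d])) : cycHolds (A ++ [z]) := by
  have conj_eq : ∀ T D : G, Commute d T → Commute d D →
      T * (d⁻¹ * z * d) * D = d⁻¹ * (T * z * D) * d := by
    intro T D h1 h2
    have e1 : T * d⁻¹ = d⁻¹ * T := h1.inv_left.eq.symm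
    calc T * (d⁻¹ * z * d) * D = (T * d⁻¹) * z * (d * D) := by group
      _ = (d⁻¹ * T) * z * (D * d) := by rw [e1, h2.eq]
      _ = d⁻¹ * (T * z * D) * d := by group
  have commL : ∀ l : List G, (∀ a ∈ l, a ∈ A) → Commute d l.reverse.prod := by
    intro l hl
    exact Commute.list_prod_right _ _ fun a ha => hc a (hl a (List.mem_reverse.mp ha))
  intro k
  have hlen : (A ++ [z]).length = A.length + 1 := by simp
  have hlen' : (A ++ [d⁻¹ * z * d]).length = A.length + 1 := by simp
  set k' := k % (A.length + 1) with hk'def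
  have hk' : k' ≤ A.length := Nat.lt_succ_iff.mp (Nat.mod_lt _ (Nat.succ_pos _))
  have hrot : (A ++ [z]).rotate k = (A ++ [z]).rotate k' := by
    conv_lhs => rw [← List.rotate_mod]
    rw [hlen]
  have hT := commL (A.take k') (fun a ha => List.mem_of_mem_take ha)
  have hD := commL (A.drop k') (fun a ha => List.mem_of_mem_drop ha)
  have hA := commL A (fun a ha => ha)
  have hw := h k'
  have hrhs : (A ++ [d⁻¹ * z * d]).reverse.prod = 1 * (d⁻¹ * z * d) * A.reverse.prod := by
    simp [mul_assoc]
  rw [rotProd_eq A _ k' hk', hrhs, conj_eq _ _ hT hD,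
    conj_eq 1 _ (Commute.one_right d) hA] at hw
  have hmain : (A.take k').reverse.prod * z * (A.drop k').reverse.prod
      = 1 * z * A.reverse.prod := mul_left_cancel (mul_right_cancel hw)
  have hz : (A ++ [z]).reverse.prod = 1 * z * A.reverse.prod := by
    simp [mul_assoc]
  rw [hrot, rotProd_eq A z k' hk', hz]
  exact hmain

end Aux

/-- In `G(n) = ⟨x₁,…,x₃ₙ ∣ R_orig(n)⟩` the cyclic relation `[x₁, x₂, …, xₙ, x₂ₙ]` holds:
`x₂ₙ xₙ ⋯ x₁ = x₁ x₂ₙ xₙ ⋯ x₂ = ⋯ = xₙ ⋯ x₁ x₂ₙ`. -/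
theorem cyclic_relation_in_Gn (n : ℕ) (hn : 2 ≤ n) :
    cycHolds ((List.range' 1 n).map (genG n) ++ [genG n (2 * n)]) := by
  set X : ℕ → FreeGroup (Fin (3 * n)) := gen (3 * n) with hX
  set f : FreeGroup (Fin (3 * n)) →* PresentedGroup (Rorig n) :=
    PresentedGroup.mk (Rorig n) with hf
  have hone : ∀ r ∈ Rorig n, f r = 1 := by
    intro r hr
    exact (QuotientGroup.eq_one_iff r).mpr (Subgroup.subset_normalClosure hr)
  have hfx : ∀ i, f (X i) = genG n i := fun i => rfl
  have hfd : ∀ a b, f (dprod X a b) = dprod (genG n) a b := by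
    intro a b
    rw [map_dprod]
    rfl
  -- relations (1): commutation of x_i with the conjugated generators
  have hsub1 : ∀ i ∈ Set.Icc 1 n, ∀ j ∈ Set.Icc (n + 1) (2 * n - 1),
      cycRels [X i, (dprod X (n + 1) (j - 1))⁻¹ * X j * dprod X (n + 1) (j - 1)]
        ⊆ Rorig n := by
    intro i hi j hj r hr
    have hm : r ∈ (⋃ i ∈ Set.Icc 1 n, ⋃ j ∈ Set.Icc (n + 1) (2 * n - 1),
        cycRels [X i, (dprod X (n + 1) (j - 1))⁻¹ * X j * dprod X (n + 1) (j - 1)]) :=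
      Set.mem_biUnion hi (Set.mem_biUnion hj hr)
    exact Or.inl (Or.inl (Or.inl (Or.inl (Or.inl hm))))
  have comm1 : ∀ i, 1 ≤ i → i ≤ n → ∀ j, n + 1 ≤ j → j ≤ 2 * n - 1 →
      Commute (genG n i)
        ((dprod (genG n) (n + 1) (j - 1))⁻¹ * genG n j *
          dprod (genG n) (n + 1) (j - 1)) := by
    intro i hi1 hi2 j hj1 hj2
    have h := cycHolds_map f _ (fun r hr => hone r (hsub1 i ⟨hi1, hi2⟩ j ⟨hj1, hj2⟩ hr))
    apply commute_of_cycHolds_pair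
    simpa [map_mul, map_inv, hfd, hfx] using h
  -- x_i commutes with the partial products d_m
  have commd : ∀ i, 1 ≤ i → i ≤ n → ∀ t, t ≤ n - 1 →
      Commute (genG n i) (dprod (genG n) (n + 1) (n + t)) := by
    intro i hi1 hi2 t
    induction t with
    | zero =>
      intro _
      have h0 : dprod (genG n) (n + 1) (n + 0) = 1 := by
        simp [dprod]
      rw [h0]
      exact Commute.one_right _
    | succ t ih =>
      intro ht
      have hd := dprod_succ (genG n) (n + 1) (n + t) (by omega)
      have hc := comm1 i hi1 hi2 (n + t + 1) (by omega) (by omega)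
      rw [Nat.add_sub_cancel] at hc
      have hih := ih (by omega)
      have he : genG n (n + t + 1) * dprod (genG n) (n + 1) (n + t)
          = dprod (genG n) (n + 1) (n + t) *
            ((dprod (genG n) (n + 1) (n + t))⁻¹ * genG n (n + t + 1) *
              dprod (genG n) (n + 1) (n + t)) := by
        group
      have hstep : dprod (genG n) (n + 1) (n + (t + 1))
          = genG n (n + t + 1) * dprod (genG n) (n + 1) (n + t) := by
        rw [show n + (t + 1) = (n + t) + 1 by omega]
        exact hd
      rw [hstep, he]
      exact hih.mul_right hc
  -- relation (2)
  have hsub2 : cycRels ((List.range' 1 n).map X ++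
      [(dprod X (n + 1) (2 * n - 1))⁻¹ * X (2 * n) * dprod X (n + 1) (2 * n - 1)])
        ⊆ Rorig n := by
    intro r hr
    exact Or.inl (Or.inl (Or.inl (Or.inl (Or.inr hr))))
  have h2 := cycHolds_map f _ (fun r hr => hone r (hsub2 hr))
  rw [List.map_append] at h2
  have hlist : ((List.range' 1 n).map X).map f = (List.range' 1 n).map (genG n) := by
    rw [List.map_map]
    rfl
  have hc2 : ([(dprod X (n + 1) (2 * n - 1))⁻¹ * X (2 * n) *
        dprod X (n + 1) (2 * n - 1)]).map f
      = [(dprod (genG n) (n + 1) (2 * n - 1))⁻¹ * genG n (2 * n) *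
          dprod (genG n) (n + 1) (2 * n - 1)] := by
    simp [map_mul, map_inv, hfd, hfx]
  rw [hlist, hc2] at h2
  refine cycHolds_conj _ _ _ ?_ h2
  intro a ha
  obtain ⟨i, hi, rfl⟩ := List.mem_map.mp ha
  rw [List.mem_range'_1] at hi
  have hcd := commd i hi.1 (by omega) (n - 1) (le_refl _)
  rw [show n + (n - 1) = 2 * n - 1 by omega] at hcd
  exact hcd.symm
end

section
/- For every integer n ≥ 4, the normal closure in the free group F on the 2n generators x_1,…,x_{2n} of the set of relators corresponding to H_orig(n) is equal to the normal closure of the set of relators corresponding to H_simp(n). Consequently, the identity map on the generators induces a group isomorphism between the presented group ⟨x_1,…,x_{2n} | H_orig(n)⟩ and the presented group ⟨x_1,…,x_{2n} | H_simp(n)⟩. (This is the group-theoretic content of the result that the fundamental group of a real affine arrangement of 2n lines whose graph of multiple points is a unique cycle of length n, with all multiple points of multiplicity 3 and no line with more than two multiple points, has a conjugation-free geometric presentation.) -/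
/-- The index set for the quadruples of type Q2: pairs `(i,j)` with `1 ≤ i < j ≤ n`,
`j - i > 1`, `i ≠ n-1`, `j ≠ n-1` and `(i,j) ≠ (n-2,n)`. -/
def QIdx (n : ℕ) : Set (ℕ × ℕ) :=
  {p | 1 ≤ p.1 ∧ p.1 < p.2 ∧ p.2 ≤ n ∧ 1 < p.2 - p.1 ∧ p.1 ≠ n - 1 ∧ p.2 ≠ n - 1 ∧
       p ≠ (n - 2, n)}

/-- The relation set `H_orig(n)` on the generators `x₁, …, x₂ₙ`. -/
def Horig (n : ℕ) : Set (FreeGroup (Fin (2 * n))) :=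
  let X : ℕ → FreeGroup (Fin (2 * n)) := gen (2 * n)
  -- (Q1)
  (⋃ i ∈ Set.Icc 2 (n - 2),
      (cycRels [X (2 * i), X (2 * n - 3)] ∪ cycRels [X (2 * i - 1), X (2 * n - 3)] ∪
       cycRels [X (2 * i), (X (2 * n - 3))⁻¹ * X (2 * n - 2) * X (2 * n - 3)] ∪
       cycRels [X (2 * i - 1), (X (2 * n - 3))⁻¹ * X (2 * n - 2) * X (2 * n - 3)])) ∪
  -- (Q2)
  (⋃ p ∈ QIdx n,
      (cycRels [X (2 * p.1),
          (dprod X (2 * p.1 + 1) (2 * p.2 - 1))⁻¹ * X (2 * p.2) *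
            dprod X (2 * p.1 + 1) (2 * p.2 - 1)] ∪
       cycRels [X (2 * p.1 - 1),
          (dprod X (2 * p.1) (2 * p.2 - 1))⁻¹ * X (2 * p.2) *
            dprod X (2 * p.1) (2 * p.2 - 1)] ∪
       cycRels [X (2 * p.1),
          (dprod X (2 * p.1 + 1) (2 * p.2 - 2))⁻¹ * X (2 * p.2 - 1) *
            dprod X (2 * p.1 + 1) (2 * p.2 - 2)] ∪
       cycRels [X (2 * p.1 - 1),
          (dprod X (2 * p.1) (2 * p.2 - 2))⁻¹ * X (2 * p.2 - 1) *
            dprod X (2 * p.1) (2 * p.2 - 2)])) ∪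
  -- (T1)
  (cycRels [X 2, X (2 * n - 3)] ∪ cycRels [X 1, X (2 * n - 3)] ∪
   cycRels [X 1, X 2, (X (2 * n - 3))⁻¹ * X (2 * n - 2) * X (2 * n - 3)]) ∪
  -- (T2)
  (⋃ i ∈ Set.Icc 1 (n - 3),
      (cycRels [X (2 * i) * X (2 * i - 1) * (X (2 * i))⁻¹, X (2 * i + 1), X (2 * i + 2)] ∪
       cycRels [X (2 * i), X (2 * i + 2)] ∪ cycRels [X (2 * i), X (2 * i + 1)])) ∪
  -- (T3)
  (cycRels [(X (2 * n - 2) * X (2 * n - 3) * X (2 * n - 4)) * X (2 * n - 5) *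
        (X (2 * n - 2) * X (2 * n - 3) * X (2 * n - 4))⁻¹, X (2 * n - 1), X (2 * n)] ∪
   cycRels [X (2 * n - 4),
      (X (2 * n - 2) * X (2 * n - 3))⁻¹ * X (2 * n) * (X (2 * n - 2) * X (2 * n - 3))] ∪
   cycRels [X (2 * n - 4),
      (X (2 * n - 2) * X (2 * n - 3))⁻¹ * X (2 * n - 1) * (X (2 * n - 2) * X (2 * n - 3))]) ∪
  -- (T4)
  (cycRels [X (2 * n - 2), X (2 * n)] ∪ cycRels [X (2 * n - 3), X (2 * n)] ∪
   cycRels [X (2 * n - 3), X (2 * n - 2), X (2 * n - 1)])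

/-- The simplified (conjugation-free) relation set `H_simp(n)` on the generators `x₁, …, x₂ₙ`. -/
def Hsimp (n : ℕ) : Set (FreeGroup (Fin (2 * n))) :=
  let X : ℕ → FreeGroup (Fin (2 * n)) := gen (2 * n)
  -- (Q1')
  (⋃ i ∈ Set.Icc 2 (n - 2), ⋃ a ∈ ({2 * i - 1, 2 * i} : Set ℕ),
      ⋃ b ∈ ({2 * n - 3, 2 * n - 2} : Set ℕ), cycRels [X a, X b]) ∪
  -- (Q2')
  (⋃ p ∈ QIdx n, ⋃ a ∈ ({2 * p.1 - 1, 2 * p.1} : Set ℕ),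
      ⋃ b ∈ ({2 * p.2 - 1, 2 * p.2} : Set ℕ), cycRels [X a, X b]) ∪
  -- (T1')
  (cycRels [X 1, X (2 * n - 3)] ∪ cycRels [X 2, X (2 * n - 3)] ∪
   cycRels [X 1, X 2, X (2 * n - 2)]) ∪
  -- (T2')
  (⋃ i ∈ Set.Icc 1 (n - 3),
      (cycRels [X (2 * i - 1), X (2 * i + 1), X (2 * i + 2)] ∪
       cycRels [X (2 * i), X (2 * i + 1)] ∪ cycRels [X (2 * i), X (2 * i + 2)])) ∪
  -- (T3')
  (cycRels [X (2 * n - 4), X (2 * n - 1)] ∪ cycRels [X (2 * n - 4), X (2 * n)] ∪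
   cycRels [X (2 * n - 5), X (2 * n - 1), X (2 * n)]) ∪
  -- (T4')
  (cycRels [X (2 * n - 2), X (2 * n)] ∪ cycRels [X (2 * n - 3), X (2 * n)] ∪
   cycRels [X (2 * n - 3), X (2 * n - 2), X (2 * n - 1)])

/-- The image of the `i`-th (1-based) generator `xᵢ` in the presented group
`H(n) = ⟨x₁,…,x₂ₙ ∣ H_orig(n)⟩`. -/
def genH (n : ℕ) (i : ℕ) : PresentedGroup (Horig n) :=
  PresentedGroup.mk (Horig n) (gen (2 * n) i)

section helpers
variable {G H : Type*} [Group G] [Group H]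

/-- triple cyclic relation -/
def Tri (a b c : H) : Prop := c*b*a = b*a*c ∧ c*b*a = a*c*b

lemma tri_comm₁ {a b c : H} (h : Tri a b c) : Commute (b*a) c :=
  h.1.symm.trans (mul_assoc c b a)

lemma tri_comm₂ {a b c : H} (h : Tri a b c) : Commute (c*b) a :=
  h.2.trans (mul_assoc a c b)

lemma tri_of {a b c : H} (h1 : Commute (b*a) c) (h2 : Commute (c*b) a) : Tri a b c :=
  ⟨(mul_assoc c b a).trans h1.symm.eq, h2.eq.trans (mul_assoc a c b).symm⟩

lemma commute_equiv_iff (f : H ≃* H) {a b : H} : Commute (f a) (f b) ↔ Commute a b := by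
  unfold Commute SemiconjBy
  rw [← map_mul, ← map_mul, f.injective.eq_iff]

lemma tri_equiv_iff (f : H ≃* H) {a b c : H} : Tri (f a) (f b) (f c) ↔ Tri a b c := by
  unfold Tri
  rw [← map_mul, ← map_mul, ← map_mul, ← map_mul, ← map_mul, ← map_mul,
    f.injective.eq_iff, f.injective.eq_iff]

lemma conj_fix {t a : H} (h : Commute t a) : t⁻¹ * a * t = a := by
  rw [h.inv_left.eq, mul_assoc, inv_mul_cancel, mul_one]

lemma conj_fix' {t a : H} (h : Commute t a) : t * a * t⁻¹ = a := by
  have := conj_fix h.inv_left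
  rwa [inv_inv] at this

lemma commute_conjr_iff {a t c : H} (h : Commute a t) : Commute a (t⁻¹ * c * t) ↔ Commute a c := by
  constructor
  · intro hc
    have h2 := (commute_equiv_iff (MulAut.conj t)).2 hc
    simp only [MulAut.conj_apply] at h2
    rw [conj_fix' h.symm] at h2
    have e : t * (t⁻¹ * c * t) * t⁻¹ = c := by group
    rwa [e] at h2
  · intro hc
    have h2 := (commute_equiv_iff (MulAut.conj t⁻¹)).2 hc
    simp only [MulAut.conj_apply, inv_inv] at h2
    rwa [conj_fix h.symm] at h2

lemma commute_conj_transfer {a t c : H} : Commute a (t⁻¹ * c * t) ↔ Commute (t * a * t⁻¹) c := by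
  constructor
  · intro hc
    have h2 := (commute_equiv_iff (MulAut.conj t)).2 hc
    simp only [MulAut.conj_apply] at h2
    have e : t * (t⁻¹ * c * t) * t⁻¹ = c := by group
    rwa [e] at h2
  · intro hc
    have h2 := (commute_equiv_iff (MulAut.conj t⁻¹)).2 hc
    simp only [MulAut.conj_apply, inv_inv] at h2
    have e1 : t⁻¹ * (t * a * t⁻¹) * t = a := by group
    rwa [e1] at h2

lemma tri_conj_a_iff {t a b c : H} (hb : Commute t b) (hc : Commute t c) :
    Tri (t * a * t⁻¹) b c ↔ Tri a b c := by
  have := tri_equiv_iff (MulAut.conj t) (a := a) (b := b) (c := c)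
  simp only [MulAut.conj_apply, conj_fix' hb, conj_fix' hc] at this
  exact this

lemma tri_conj_c_iff {t a b c : H} (ha : Commute t a) (hb : Commute t b) :
    Tri a b (t⁻¹ * c * t) ↔ Tri a b c := by
  have := tri_equiv_iff (MulAut.conj t⁻¹) (a := a) (b := b) (c := c)
  simp only [MulAut.conj_apply, inv_inv, conj_fix ha, conj_fix hb] at this
  exact this

lemma conj_switch {a z c : H} (h : Commute (a * z) c) : a⁻¹ * c * a = z * c * z⁻¹ := by
  calc a⁻¹ * c * a = a⁻¹ * (c * (a * z)) * z⁻¹ := by group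
    _ = a⁻¹ * ((a * z) * c) * z⁻¹ := by rw [h.symm.eq]
    _ = z * c * z⁻¹ := by group

lemma conj_absorb {p u x : H} (hfix : p⁻¹ * x * p = x) :
    (p * u)⁻¹ * x * (p * u) = u⁻¹ * x * u := by
  have e : (p * u)⁻¹ * x * (p * u) = u⁻¹ * (p⁻¹ * x * p) * u := by group
  rw [e, hfix]

lemma fix_inner {p z oj en : H} (h5 : Commute (oj * z) en)
    (hpz : Commute p z) (hpe : Commute p en) :
    p⁻¹ * (oj⁻¹ * en * oj) * p = oj⁻¹ * en * oj := by
  rw [conj_switch h5]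
  exact conj_fix ((hpz.mul_right hpe).mul_right hpz.inv_right)

/-- Master transfer lemma for the (Q2) relators. -/
lemma Q2_transfer {o e oj ej W g C : H}
    (hge : Commute e g) (hgo : Commute o g)
    (hWe : Commute e W) (hWo : Commute o W)
    (hCoj : C⁻¹ * oj * C = g⁻¹ * (W⁻¹ * oj * W) * g)
    (hCej : C⁻¹ * (oj⁻¹ * ej * oj) * C = g⁻¹ * (W⁻¹ * (oj⁻¹ * ej * oj) * W) * g) :
    (Commute e (C⁻¹ * oj * C) ↔ Commute e oj) ∧
    (Commute e oj →
      (Commute o ((C * e)⁻¹ * oj * (C * e)) ↔ Commute o oj)) ∧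
    (Commute e oj →
      (Commute e ((oj * C)⁻¹ * ej * (oj * C)) ↔ Commute e ej)) ∧
    (Commute e oj → Commute o oj → Commute e ej →
      (Commute o ((oj * C * e)⁻¹ * ej * (oj * C * e)) ↔ Commute o ej)) := by
  have heoe_g : Commute (e * o * e⁻¹) g :=
    (hge.mul_left hgo).mul_left hge.inv_left
  have heoe_W : Commute (e * o * e⁻¹) W :=
    (hWe.mul_left hWo).mul_left hWe.inv_left
  refine ⟨?_, ?_, ?_, ?_⟩
  · rw [hCoj, commute_conjr_iff hge, commute_conjr_iff hWe]
  · intro heoj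
    have e1 : (C * e)⁻¹ * oj * (C * e) = e⁻¹ * (C⁻¹ * oj * C) * e := by group
    rw [e1, hCoj, commute_conj_transfer, commute_conjr_iff heoe_g, commute_conjr_iff heoe_W,
      ← commute_conj_transfer, conj_fix heoj]
  · intro heoj
    have e1 : (oj * C)⁻¹ * ej * (oj * C) = C⁻¹ * (oj⁻¹ * ej * oj) * C := by group
    rw [e1, hCej, commute_conjr_iff hge, commute_conjr_iff hWe, commute_conjr_iff heoj]
  · intro heoj hooj heej
    have e1 : (oj * C * e)⁻¹ * ej * (oj * C * e) = e⁻¹ * (C⁻¹ * (oj⁻¹ * ej * oj) * C) * e := by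
      group
    have e2 : e⁻¹ * (oj⁻¹ * ej * oj) * e = oj⁻¹ * ej * oj :=
      conj_fix ((commute_conjr_iff heoj).2 heej)
    rw [e1, hCej, commute_conj_transfer, commute_conjr_iff heoe_g, commute_conjr_iff heoe_W,
      ← commute_conj_transfer, e2, commute_conjr_iff hooj]

end helpers

section cyc
variable {G H : Type*} [Group G] [Group H] (φ : G →* H)

lemma cycRels_pair {a b : G} (h : Commute (φ a) (φ b)) : ∀ r ∈ cycRels [a, b], φ r = 1 := by
  rintro r ⟨k, rfl⟩
  have hk : [a,b].rotate k = [a,b] ∨ [a,b].rotate k = [b,a] := by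
    rw [← List.rotate_mod]
    have h2 : k % [a,b].length = 0 ∨ k % [a,b].length = 1 := by
      simp only [List.length]; omega
    rcases h2 with h2 | h2 <;> rw [h2] <;> simp [List.rotate]
  rcases hk with hk | hk <;> rw [hk] <;>
    simp only [List.reverse_cons, List.reverse_nil, List.nil_append, List.cons_append,
      List.prod_cons, List.prod_nil, mul_one, map_mul, map_inv, mul_inv_rev]
  · group
  · rw [h.eq]; group

lemma cycRels_pair_extract {a b : G} (h : ∀ r ∈ cycRels [a, b], φ r = 1) :
    Commute (φ a) (φ b) := by
  have h1 := h ([b,a].reverse.prod * ([a,b].reverse.prod)⁻¹)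
    ⟨1, by rw [show [a,b].rotate 1 = [b,a] from by simp [List.rotate]]⟩
  simp only [List.reverse_cons, List.reverse_nil, List.nil_append, List.cons_append,
    List.prod_cons, List.prod_nil, mul_one, map_mul, map_inv, mul_inv_rev] at h1
  have : φ a * φ b = φ b * φ a := by
    have h2 := mul_eq_one_iff_eq_inv.mp h1
    rw [h2]; group
  exact this

lemma cycRels_tri {a b c : G} (h : Tri (φ a) (φ b) (φ c)) : ∀ r ∈ cycRels [a, b, c], φ r = 1 := by
  rintro r ⟨k, rfl⟩
  have hk : [a,b,c].rotate k = [a,b,c] ∨ [a,b,c].rotate k = [b,c,a] ∨ [a,b,c].rotate k = [c,a,b] := by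
    rw [← List.rotate_mod]
    have h2 : k % [a,b,c].length = 0 ∨ k % [a,b,c].length = 1 ∨ k % [a,b,c].length = 2 := by
      simp only [List.length]; omega
    rcases h2 with h2 | h2 | h2 <;> rw [h2] <;> simp [List.rotate]
  rcases hk with hk | hk | hk <;> rw [hk] <;>
    simp only [List.reverse_cons, List.reverse_nil, List.nil_append, List.cons_append,
      List.prod_cons, List.prod_nil, mul_one, map_mul, map_inv, mul_inv_rev]
  · group
  · have h2 : φ a * (φ c * φ b) = φ c * (φ b * φ a) := by
      rw [show φ a * (φ c * φ b) = φ a * φ c * φ b by group, ← h.2]; group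
    rw [h2]; group
  · have h2 : φ b * (φ a * φ c) = φ c * (φ b * φ a) := by
      rw [show φ b * (φ a * φ c) = φ b * φ a * φ c by group, ← h.1]; group
    rw [h2]; group

lemma cycRels_tri_extract {a b c : G} (h : ∀ r ∈ cycRels [a, b, c], φ r = 1) :
    Tri (φ a) (φ b) (φ c) := by
  have h1 := h ([b,c,a].reverse.prod * ([a,b,c].reverse.prod)⁻¹)
    ⟨1, by rw [show [a,b,c].rotate 1 = [b,c,a] from by simp [List.rotate]]⟩
  have h2 := h ([c,a,b].reverse.prod * ([a,b,c].reverse.prod)⁻¹)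
    ⟨2, by rw [show [a,b,c].rotate 2 = [c,a,b] from by simp [List.rotate]]⟩
  simp only [List.reverse_cons, List.reverse_nil, List.nil_append, List.cons_append,
    List.prod_cons, List.prod_nil, mul_one, map_mul, map_inv, mul_inv_rev] at h1 h2
  constructor
  · have h3 := mul_eq_one_iff_eq_inv.mp h2
    have : φ b * φ a * φ c = φ c * φ b * φ a := by
      rw [show φ b * φ a * φ c = φ b * (φ a * φ c) by group, h3]; group
    exact this.symm
  · have h3 := mul_eq_one_iff_eq_inv.mp h1
    have : φ a * φ c * φ b = φ c * φ b * φ a := by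
      rw [show φ a * φ c * φ b = φ a * (φ c * φ b) by group, h3]; group
    exact this.symm
end cyc

section dp
variable {G H : Type*} [Group G] [Group H] (φ : G →* H) (X : ℕ → G) (Y : ℕ → H)

lemma dprod_map (a b : ℕ) : φ (dprod X a b) = dprod (fun k => φ (X k)) a b := by
  unfold dprod
  rw [← List.prod_hom _ φ, List.map_map]
  rfl

lemma dprod_empty (a b : ℕ) (h : b < a) : dprod Y a b = 1 := by
  unfold dprod
  rw [show b + 1 - a = 0 by omega]
  simp

lemma dprod_append (a b c : ℕ) (h1 : a ≤ c + 1) (h2 : c ≤ b) :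
    dprod Y a b = dprod Y (c + 1) b * dprod Y a c := by
  unfold dprod
  have e : List.range' a (b + 1 - a) = List.range' a (c + 1 - a) ++ List.range' (c + 1) (b - c) := by
    have h3 := List.range'_append (s := a) (m := c + 1 - a) (n := b - c) (step := 1)
    rw [show a + 1 * (c + 1 - a) = c + 1 by omega] at h3
    rw [h3]
    congr 1
    omega
  rw [show b + 1 - (c + 1) = b - c from by omega, e, List.reverse_append, List.map_append,
    List.prod_append]

lemma dprod_singleton (a : ℕ) : dprod Y a a = Y a := by
  unfold dprod
  simp [show a + 1 - a = 1 by omega]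

lemma dprod_commute {g : H} (a b : ℕ) (h : ∀ k, a ≤ k → k ≤ b → Commute g (Y k)) :
    Commute g (dprod Y a b) := by
  unfold dprod
  apply Commute.list_prod_right
  intro x hx
  rw [List.mem_map] at hx
  obtain ⟨k, hk, rfl⟩ := hx
  rw [List.mem_reverse, List.mem_range'_1] at hk
  exact h k hk.1 (by omega)

lemma dprod_split_low (a b : ℕ) (h : a + 1 ≤ b) :
    dprod Y a b = dprod Y (a + 2) b * (Y (a + 1) * Y a) := by
  rw [dprod_append Y a b (a + 1) (by omega) (by omega),
    dprod_append Y a (a + 1) a (by omega) (by omega),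
    show a + 1 + 1 = a + 2 from by omega, dprod_singleton, dprod_singleton]

end dp

section q2m
variable {H : Type*} [Group H] (Y : ℕ → H)

lemma Q2_gen_conj (i j : ℕ) (h2 : i + 2 ≤ j) (x : H) :
    (dprod Y (2*i+1) (2*j-2))⁻¹ * x * dprod Y (2*i+1) (2*j-2)
      = (Y (2*i+2) * Y (2*i+1))⁻¹ *
          ((dprod Y (2*i+3) (2*j-2))⁻¹ * x * dprod Y (2*i+3) (2*j-2)) *
          (Y (2*i+2) * Y (2*i+1)) := by
  rw [dprod_split_low Y (2*i+1) (2*j-2) (by omega),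
    show 2*i+1+2 = 2*i+3 from by omega, show 2*i+1+1 = 2*i+2 from by omega]
  group

lemma Q2_spec_conj (n : ℕ) (hn : 4 ≤ n) (x : H)
    (hfix : (Y (2*n-2) * Y (2*n-3))⁻¹ * x * (Y (2*n-2) * Y (2*n-3)) = x) :
    (dprod Y 3 (2*n-2))⁻¹ * x * dprod Y 3 (2*n-2)
      = (Y 4 * Y 3)⁻¹ * ((dprod Y 5 (2*n-4))⁻¹ * x * dprod Y 5 (2*n-4)) * (Y 4 * Y 3) := by
  have hsplit : dprod Y 3 (2*n-2)
      = (Y (2*n-2) * Y (2*n-3)) * (dprod Y 5 (2*n-4) * (Y 4 * Y 3)) := by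
    rw [dprod_append Y 3 (2*n-2) (2*n-4) (by omega) (by omega),
      show 2*n-4+1 = 2*n-3 from by omega,
      dprod_append Y (2*n-3) (2*n-2) (2*n-3) (by omega) (by omega),
      show 2*n-3+1 = 2*n-2 from by omega, dprod_singleton, dprod_singleton,
      dprod_split_low Y 3 (2*n-4) (by omega)]
  rw [hsplit, conj_absorb hfix]
  group

lemma Q2_iffs (i j : ℕ) (h1 : 1 ≤ i) (h2 : i + 2 ≤ j) (W g : H)
    (hge : Commute (Y (2*i)) g) (hgo : Commute (Y (2*i-1)) g)
    (hWe : Commute (Y (2*i)) W) (hWo : Commute (Y (2*i-1)) W)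
    (hCoj : (dprod Y (2*i+1) (2*j-2))⁻¹ * Y (2*j-1) * dprod Y (2*i+1) (2*j-2)
      = g⁻¹ * (W⁻¹ * Y (2*j-1) * W) * g)
    (hCej : (dprod Y (2*i+1) (2*j-2))⁻¹ * ((Y (2*j-1))⁻¹ * Y (2*j) * Y (2*j-1)) *
        dprod Y (2*i+1) (2*j-2)
      = g⁻¹ * (W⁻¹ * ((Y (2*j-1))⁻¹ * Y (2*j) * Y (2*j-1)) * W) * g) :
    (Commute (Y (2*i)) ((dprod Y (2*i+1) (2*j-2))⁻¹ * Y (2*j-1) * dprod Y (2*i+1) (2*j-2))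
       ↔ Commute (Y (2*i)) (Y (2*j-1))) ∧
    (Commute (Y (2*i)) (Y (2*j-1)) →
      (Commute (Y (2*i-1)) ((dprod Y (2*i) (2*j-2))⁻¹ * Y (2*j-1) * dprod Y (2*i) (2*j-2))
       ↔ Commute (Y (2*i-1)) (Y (2*j-1)))) ∧
    (Commute (Y (2*i)) (Y (2*j-1)) →
      (Commute (Y (2*i)) ((dprod Y (2*i+1) (2*j-1))⁻¹ * Y (2*j) * dprod Y (2*i+1) (2*j-1))
       ↔ Commute (Y (2*i)) (Y (2*j)))) ∧
    (Commute (Y (2*i)) (Y (2*j-1)) → Commute (Y (2*i-1)) (Y (2*j-1)) →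
        Commute (Y (2*i)) (Y (2*j)) →
      (Commute (Y (2*i-1)) ((dprod Y (2*i) (2*j-1))⁻¹ * Y (2*j) * dprod Y (2*i) (2*j-1))
       ↔ Commute (Y (2*i-1)) (Y (2*j)))) := by
  have Ea : dprod Y (2*i+1) (2*j-1) = Y (2*j-1) * dprod Y (2*i+1) (2*j-2) := by
    rw [dprod_append Y (2*i+1) (2*j-1) (2*j-2) (by omega) (by omega),
      show 2*j-2+1 = 2*j-1 from by omega, dprod_singleton]
  have Ed : dprod Y (2*i) (2*j-2) = dprod Y (2*i+1) (2*j-2) * Y (2*i) := by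
    rw [dprod_append Y (2*i) (2*j-2) (2*i) (by omega) (by omega), dprod_singleton]
  have Eb : dprod Y (2*i) (2*j-1) = Y (2*j-1) * dprod Y (2*i+1) (2*j-2) * Y (2*i) := by
    rw [dprod_append Y (2*i) (2*j-1) (2*i) (by omega) (by omega), dprod_singleton, Ea]
  obtain ⟨c1, c2, c3, c4⟩ := Q2_transfer hge hgo hWe hWo hCoj hCej
  refine ⟨c1, ?_, ?_, ?_⟩
  · intro hP3
    rw [Ed]
    exact c2 hP3
  · intro hP3
    rw [Ea]
    exact c3 hP3
  · intro hP3 hP4 hP1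
    rw [Eb]
    exact c4 hP3 hP4 hP1
end q2m

lemma mem_QIdx_iff {n i j : ℕ} : (i, j) ∈ QIdx n ↔
    (1 ≤ i ∧ i < j ∧ j ≤ n ∧ 1 < j - i ∧ i ≠ n - 1 ∧ j ≠ n - 1 ∧ ¬(i = n - 2 ∧ j = n)) := by
  simp [QIdx, Prod.ext_iff]

section cores
variable {H : Type*} [Group H]

lemma coreA (n : ℕ) (hn : 4 ≤ n) (Y : ℕ → H)
    (hS1 : ∀ m a b, 2 ≤ m → m ≤ n-2 → (a = 2*m-1 ∨ a = 2*m) → (b = 2*n-3 ∨ b = 2*n-2) →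
      Commute (Y a) (Y b))
    (hS2 : ∀ i j a b, (i,j) ∈ QIdx n → (a = 2*i-1 ∨ a = 2*i) → (b = 2*j-1 ∨ b = 2*j) →
      Commute (Y a) (Y b))
    (hT2 : ∀ i, 1 ≤ i → i ≤ n-3 →
      Tri (Y (2*i-1)) (Y (2*i+1)) (Y (2*i+2)) ∧ Commute (Y (2*i)) (Y (2*i+1)) ∧
        Commute (Y (2*i)) (Y (2*i+2)))
    (hT3c : Tri (Y (2*n-5)) (Y (2*n-1)) (Y (2*n)))
    (hT4a : Commute (Y (2*n-2)) (Y (2*n))) (hT4b : Commute (Y (2*n-3)) (Y (2*n)))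
    (hT4c : Tri (Y (2*n-3)) (Y (2*n-2)) (Y (2*n-1)))
    (i j : ℕ) (hij : (i,j) ∈ QIdx n) :
    Commute (Y (2*i)) ((dprod Y (2*i+1) (2*j-1))⁻¹ * Y (2*j) * dprod Y (2*i+1) (2*j-1)) ∧
    Commute (Y (2*i-1)) ((dprod Y (2*i) (2*j-1))⁻¹ * Y (2*j) * dprod Y (2*i) (2*j-1)) ∧
    Commute (Y (2*i)) ((dprod Y (2*i+1) (2*j-2))⁻¹ * Y (2*j-1) * dprod Y (2*i+1) (2*j-2)) ∧
    Commute (Y (2*i-1)) ((dprod Y (2*i) (2*j-2))⁻¹ * Y (2*j-1) * dprod Y (2*i) (2*j-2)) := by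
  obtain ⟨h1i, hlt, hjn, hgap, hin1, hjn1, hne⟩ := mem_QIdx_iff.1 hij
  have h2 : i + 2 ≤ j := by omega
  have hi3 : i ≤ n - 3 := by
    have : i ≠ n - 2 := fun h => hne ⟨h, by omega⟩
    omega
  have hT2i := hT2 i h1i hi3
  by_cases hsp : i = 1 ∧ j = n
  · obtain ⟨hi1, hj1⟩ := hsp
    subst hi1
    have hj2 : n = j := hj1.symm
    subst hj2
    -- special case (1, n)
    have hp_oj : Commute (Y (2*n-2) * Y (2*n-3)) (Y (2*n-1)) := tri_comm₁ hT4c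
    have hz : Commute (Y (2*n-1) * Y (2*n-5)) (Y (2*n)) := tri_comm₁ hT3c
    have hs1a : Commute (Y (2*n-5)) (Y (2*n-3)) :=
      hS1 (n-2) (2*n-5) (2*n-3) (by omega) (by omega) (Or.inl (by omega)) (Or.inl rfl)
    have hs1b : Commute (Y (2*n-5)) (Y (2*n-2)) :=
      hS1 (n-2) (2*n-5) (2*n-2) (by omega) (by omega) (Or.inl (by omega)) (Or.inr rfl)
    have hpz : Commute (Y (2*n-2) * Y (2*n-3)) (Y (2*n-5)) := hs1b.symm.mul_left hs1a.symm
    have hpe : Commute (Y (2*n-2) * Y (2*n-3)) (Y (2*n)) := hT4a.mul_left hT4b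
    have hfix1 : (Y (2*n-2) * Y (2*n-3))⁻¹ * Y (2*n-1) * (Y (2*n-2) * Y (2*n-3)) = Y (2*n-1) :=
      conj_fix hp_oj
    have hfix2 : (Y (2*n-2) * Y (2*n-3))⁻¹ * ((Y (2*n-1))⁻¹ * Y (2*n) * Y (2*n-1)) *
        (Y (2*n-2) * Y (2*n-3)) = (Y (2*n-1))⁻¹ * Y (2*n) * Y (2*n-1) :=
      fix_inner hz hpz hpe
    have hWcom : ∀ a, (a = 1 ∨ a = 2) → Commute (Y a) (dprod Y 5 (2*n-4)) := by
      intro a ha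
      apply dprod_commute
      intro k hk1 hk2
      obtain ⟨m, hm, hm1, hm2⟩ : ∃ m, (k = 2*m-1 ∨ k = 2*m) ∧ 3 ≤ m ∧ m ≤ n-2 :=
        ⟨(k+1)/2, by omega⟩
      exact hS2 1 m a k (mem_QIdx_iff.2 (by omega)) (by omega) hm
    have hT21 := hT2 1 (by omega) (by omega)
    norm_num at hT21
    have hge : Commute (Y 2) (Y 4 * Y 3) := hT21.2.2.mul_right hT21.2.1
    have hgo : Commute (Y 1) (Y 4 * Y 3) := (tri_comm₂ hT21.1).symm
    have hCoj := Q2_spec_conj Y n hn (Y (2*n-1)) hfix1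
    have hCej := Q2_spec_conj Y n hn ((Y (2*n-1))⁻¹ * Y (2*n) * Y (2*n-1)) hfix2
    have hP : (1, n) ∈ QIdx n := mem_QIdx_iff.2 (by omega)
    have hP3 : Commute (Y 2) (Y (2*n-1)) := hS2 1 n 2 (2*n-1) hP (by omega) (by omega)
    have hP4 : Commute (Y 1) (Y (2*n-1)) := hS2 1 n 1 (2*n-1) hP (by omega) (by omega)
    have hP1 : Commute (Y 2) (Y (2*n)) := hS2 1 n 2 (2*n) hP (by omega) (by omega)
    have hP2 : Commute (Y 1) (Y (2*n)) := hS2 1 n 1 (2*n) hP (by omega) (by omega)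
    have pack := Q2_iffs Y 1 n (by omega) (by omega) (dprod Y 5 (2*n-4)) (Y 4 * Y 3)
      hge hgo (hWcom 2 (Or.inr rfl)) (hWcom 1 (Or.inl rfl)) hCoj hCej
    norm_num at pack ⊢
    exact ⟨(pack.2.2.1 hP3).mpr hP1, (pack.2.2.2 hP3 hP4 hP1).mpr hP2, pack.1.mpr hP3,
      (pack.2.1 hP3).mpr hP4⟩
  · -- general case
    have hWcom : ∀ a, (a = 2*i-1 ∨ a = 2*i) → Commute (Y a) (dprod Y (2*i+3) (2*j-2)) := by
      intro a ha
      apply dprod_commute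
      intro k hk1 hk2
      obtain ⟨m, hm, hm1, hm2⟩ : ∃ m, (k = 2*m-1 ∨ k = 2*m) ∧ i+2 ≤ m ∧ m ≤ j-1 :=
        ⟨(k+1)/2, by omega⟩
      by_cases hmn : m = n-1
      · have hj : j = n := by omega
        have hi1 : i ≠ 1 := fun h => hsp ⟨h, hj⟩
        exact hS1 i a k (by omega) (by omega) ha (by omega)
      · exact hS2 i m a k (mem_QIdx_iff.2 (by omega)) ha hm
    have hge : Commute (Y (2*i)) (Y (2*i+2) * Y (2*i+1)) := hT2i.2.2.mul_right hT2i.2.1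
    have hgo : Commute (Y (2*i-1)) (Y (2*i+2) * Y (2*i+1)) := (tri_comm₂ hT2i.1).symm
    have pack := Q2_iffs Y i j h1i h2 (dprod Y (2*i+3) (2*j-2)) (Y (2*i+2) * Y (2*i+1))
      hge hgo (hWcom _ (Or.inr rfl)) (hWcom _ (Or.inl rfl))
      (Q2_gen_conj Y i j h2 _) (Q2_gen_conj Y i j h2 _)
    have hP3 := hS2 i j (2*i) (2*j-1) hij (Or.inr rfl) (Or.inl rfl)
    have hP4 := hS2 i j (2*i-1) (2*j-1) hij (Or.inl rfl) (Or.inl rfl)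
    have hP1 := hS2 i j (2*i) (2*j) hij (Or.inr rfl) (Or.inr rfl)
    have hP2 := hS2 i j (2*i-1) (2*j) hij (Or.inl rfl) (Or.inr rfl)
    exact ⟨(pack.2.2.1 hP3).mpr hP1, (pack.2.2.2 hP3 hP4 hP1).mpr hP2, pack.1.mpr hP3,
      (pack.2.1 hP3).mpr hP4⟩

lemma coreB (n : ℕ) (hn : 4 ≤ n) (Y : ℕ → H)
    (hQ1 : ∀ m a b, 2 ≤ m → m ≤ n-2 → (a = 2*m-1 ∨ a = 2*m) → (b = 2*n-3 ∨ b = 2*n-2) →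
      Commute (Y a) (Y b))
    (hT2 : ∀ i, 1 ≤ i → i ≤ n-3 →
      Tri (Y (2*i-1)) (Y (2*i+1)) (Y (2*i+2)) ∧ Commute (Y (2*i)) (Y (2*i+1)) ∧
        Commute (Y (2*i)) (Y (2*i+2)))
    (hT3c : Tri (Y (2*n-5)) (Y (2*n-1)) (Y (2*n)))
    (hT4a : Commute (Y (2*n-2)) (Y (2*n))) (hT4b : Commute (Y (2*n-3)) (Y (2*n)))
    (hT4c : Tri (Y (2*n-3)) (Y (2*n-2)) (Y (2*n-1)))
    (hO2 : ∀ i j, (i,j) ∈ QIdx n →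
      Commute (Y (2*i)) ((dprod Y (2*i+1) (2*j-1))⁻¹ * Y (2*j) * dprod Y (2*i+1) (2*j-1)) ∧
      Commute (Y (2*i-1)) ((dprod Y (2*i) (2*j-1))⁻¹ * Y (2*j) * dprod Y (2*i) (2*j-1)) ∧
      Commute (Y (2*i)) ((dprod Y (2*i+1) (2*j-2))⁻¹ * Y (2*j-1) * dprod Y (2*i+1) (2*j-2)) ∧
      Commute (Y (2*i-1)) ((dprod Y (2*i) (2*j-2))⁻¹ * Y (2*j-1) * dprod Y (2*i) (2*j-2))) :
    ∀ j i, (i,j) ∈ QIdx n →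
      Commute (Y (2*i)) (Y (2*j-1)) ∧ Commute (Y (2*i-1)) (Y (2*j-1)) ∧
      Commute (Y (2*i)) (Y (2*j)) ∧ Commute (Y (2*i-1)) (Y (2*j)) := by
  intro j
  induction j using Nat.strong_induction_on with
  | _ j IH =>
  intro i hij
  obtain ⟨h1i, hlt, hjn, hgap, hin1, hjn1, hne⟩ := mem_QIdx_iff.1 hij
  have h2 : i + 2 ≤ j := by omega
  have hi3 : i ≤ n - 3 := by
    have : i ≠ n - 2 := fun h => hne ⟨h, by omega⟩
    omega
  have hT2i := hT2 i h1i hi3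
  obtain ⟨hr1, hr2, hr3, hr4⟩ := hO2 i j hij
  by_cases hsp : i = 1 ∧ j = n
  · obtain ⟨hi1, hj1⟩ := hsp
    subst hi1
    have hj2 : n = j := hj1.symm
    subst hj2
    -- special case (1, n)
    have hp_oj : Commute (Y (2*n-2) * Y (2*n-3)) (Y (2*n-1)) := tri_comm₁ hT4c
    have hz : Commute (Y (2*n-1) * Y (2*n-5)) (Y (2*n)) := tri_comm₁ hT3c
    have hs1a : Commute (Y (2*n-5)) (Y (2*n-3)) :=
      hQ1 (n-2) (2*n-5) (2*n-3) (by omega) (by omega) (Or.inl (by omega)) (Or.inl rfl)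
    have hs1b : Commute (Y (2*n-5)) (Y (2*n-2)) :=
      hQ1 (n-2) (2*n-5) (2*n-2) (by omega) (by omega) (Or.inl (by omega)) (Or.inr rfl)
    have hpz : Commute (Y (2*n-2) * Y (2*n-3)) (Y (2*n-5)) := hs1b.symm.mul_left hs1a.symm
    have hpe : Commute (Y (2*n-2) * Y (2*n-3)) (Y (2*n)) := hT4a.mul_left hT4b
    have hfix1 : (Y (2*n-2) * Y (2*n-3))⁻¹ * Y (2*n-1) * (Y (2*n-2) * Y (2*n-3)) = Y (2*n-1) :=
      conj_fix hp_oj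
    have hfix2 : (Y (2*n-2) * Y (2*n-3))⁻¹ * ((Y (2*n-1))⁻¹ * Y (2*n) * Y (2*n-1)) *
        (Y (2*n-2) * Y (2*n-3)) = (Y (2*n-1))⁻¹ * Y (2*n) * Y (2*n-1) :=
      fix_inner hz hpz hpe
    have hWcom : ∀ a, (a = 1 ∨ a = 2) → Commute (Y a) (dprod Y 5 (2*n-4)) := by
      intro a ha
      apply dprod_commute
      intro k hk1 hk2
      obtain ⟨m, hm, hm1, hm2⟩ : ∃ m, (k = 2*m-1 ∨ k = 2*m) ∧ 3 ≤ m ∧ m ≤ n-2 :=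
        ⟨(k+1)/2, by omega⟩
      have hIH := IH m (by omega) 1 (mem_QIdx_iff.2 (by omega))
      norm_num at hIH
      rcases ha with rfl | rfl <;> rcases hm with rfl | rfl
      · exact hIH.2.1
      · exact hIH.2.2.2
      · exact hIH.1
      · exact hIH.2.2.1
    have hT21 := hT2 1 (by omega) (by omega)
    norm_num at hT21
    have hge : Commute (Y 2) (Y 4 * Y 3) := hT21.2.2.mul_right hT21.2.1
    have hgo : Commute (Y 1) (Y 4 * Y 3) := (tri_comm₂ hT21.1).symm
    have hCoj := Q2_spec_conj Y n hn (Y (2*n-1)) hfix1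
    have hCej := Q2_spec_conj Y n hn ((Y (2*n-1))⁻¹ * Y (2*n) * Y (2*n-1)) hfix2
    have pack := Q2_iffs Y 1 n (by omega) (by omega) (dprod Y 5 (2*n-4)) (Y 4 * Y 3)
      hge hgo (hWcom 2 (Or.inr rfl)) (hWcom 1 (Or.inl rfl)) hCoj hCej
    have hP3 := pack.1.mp hr3
    have hP4 := (pack.2.1 hP3).mp hr4
    have hP1 := (pack.2.2.1 hP3).mp hr1
    have hP2 := (pack.2.2.2 hP3 hP4 hP1).mp hr2
    exact ⟨hP3, hP4, hP1, hP2⟩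
  · -- general case
    have hWcom : ∀ a, (a = 2*i-1 ∨ a = 2*i) → Commute (Y a) (dprod Y (2*i+3) (2*j-2)) := by
      intro a ha
      apply dprod_commute
      intro k hk1 hk2
      obtain ⟨m, hm, hm1, hm2⟩ : ∃ m, (k = 2*m-1 ∨ k = 2*m) ∧ i+2 ≤ m ∧ m ≤ j-1 :=
        ⟨(k+1)/2, by omega⟩
      by_cases hmn : m = n-1
      · have hj : j = n := by omega
        have hi1 : i ≠ 1 := fun h => hsp ⟨h, hj⟩
        exact hQ1 i a k (by omega) (by omega) ha (by omega)
      · have hIH := IH m (by omega) i (mem_QIdx_iff.2 (by omega))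
        rcases ha with rfl | rfl <;> rcases hm with rfl | rfl
        · exact hIH.2.1
        · exact hIH.2.2.2
        · exact hIH.1
        · exact hIH.2.2.1
    have hge : Commute (Y (2*i)) (Y (2*i+2) * Y (2*i+1)) := hT2i.2.2.mul_right hT2i.2.1
    have hgo : Commute (Y (2*i-1)) (Y (2*i+2) * Y (2*i+1)) := (tri_comm₂ hT2i.1).symm
    have pack := Q2_iffs Y i j h1i h2 (dprod Y (2*i+3) (2*j-2)) (Y (2*i+2) * Y (2*i+1))
      hge hgo (hWcom _ (Or.inr rfl)) (hWcom _ (Or.inl rfl))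
      (Q2_gen_conj Y i j h2 _) (Q2_gen_conj Y i j h2 _)
    have hP3 := pack.1.mp hr3
    have hP4 := (pack.2.1 hP3).mp hr4
    have hP1 := (pack.2.2.1 hP3).mp hr1
    have hP2 := (pack.2.2.2 hP3 hP4 hP1).mp hr2
    exact ⟨hP3, hP4, hP1, hP2⟩

end cores

lemma dirA (n : ℕ) (hn : 4 ≤ n) :
    Horig n ⊆ ↑(Subgroup.normalClosure (Hsimp n)) := by
  intro r hr
  let φ : FreeGroup (Fin (2*n)) →* _ := QuotientGroup.mk' (Subgroup.normalClosure (Hsimp n))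
  let Y : ℕ → _ := fun k => φ (gen (2*n) k)
  have mem1 : ∀ s ∈ Hsimp n, φ s = 1 := fun s hs =>
    (QuotientGroup.eq_one_iff s).2 (Subgroup.subset_normalClosure hs)
  -- extraction of the simplified relations
  have hS1 : ∀ m a b, 2 ≤ m → m ≤ n-2 → (a = 2*m-1 ∨ a = 2*m) → (b = 2*n-3 ∨ b = 2*n-2) →
      Commute (Y a) (Y b) := by
    intro m a b hm1 hm2 ha hb
    refine cycRels_pair_extract φ ?_
    intro s hs
    apply mem1
    simp only [Hsimp, Set.mem_union, Set.mem_iUnion]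
    refine Or.inl (Or.inl (Or.inl (Or.inl (Or.inl ?_))))
    exact ⟨m, Set.mem_Icc.2 ⟨hm1, hm2⟩, a, by rcases ha with rfl|rfl <;> simp,
      b, by rcases hb with rfl|rfl <;> simp, hs⟩
  have hS2 : ∀ i j a b, (i,j) ∈ QIdx n → (a = 2*i-1 ∨ a = 2*i) → (b = 2*j-1 ∨ b = 2*j) →
      Commute (Y a) (Y b) := by
    intro i j a b hp ha hb
    refine cycRels_pair_extract φ ?_
    intro s hs
    apply mem1
    simp only [Hsimp, Set.mem_union, Set.mem_iUnion]
    refine Or.inl (Or.inl (Or.inl (Or.inl (Or.inr ?_))))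
    exact ⟨(i,j), hp, a, by rcases ha with rfl|rfl <;> simp,
      b, by rcases hb with rfl|rfl <;> simp, hs⟩
  have hT1a : Commute (Y 1) (Y (2*n-3)) := by
    refine cycRels_pair_extract φ ?_
    intro s hs
    apply mem1
    simp only [Hsimp, Set.mem_union]
    exact Or.inl (Or.inl (Or.inl (Or.inr (Or.inl (Or.inl hs)))))
  have hT1b : Commute (Y 2) (Y (2*n-3)) := by
    refine cycRels_pair_extract φ ?_
    intro s hs
    apply mem1
    simp only [Hsimp, Set.mem_union]
    exact Or.inl (Or.inl (Or.inl (Or.inr (Or.inl (Or.inr hs)))))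
  have hT1c : Tri (Y 1) (Y 2) (Y (2*n-2)) := by
    refine cycRels_tri_extract φ ?_
    intro s hs
    apply mem1
    simp only [Hsimp, Set.mem_union]
    exact Or.inl (Or.inl (Or.inl (Or.inr (Or.inr hs))))
  have hT2pack : ∀ i, 1 ≤ i → i ≤ n-3 →
      Tri (Y (2*i-1)) (Y (2*i+1)) (Y (2*i+2)) ∧ Commute (Y (2*i)) (Y (2*i+1)) ∧
        Commute (Y (2*i)) (Y (2*i+2)) := by
    intro i h1 h3
    refine ⟨cycRels_tri_extract φ ?_, cycRels_pair_extract φ ?_, cycRels_pair_extract φ ?_⟩ <;>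
      intro s hs <;> apply mem1 <;>
      simp only [Hsimp, Set.mem_union, Set.mem_iUnion] <;>
      refine Or.inl (Or.inl (Or.inr ⟨i, Set.mem_Icc.2 ⟨h1, h3⟩, ?_⟩))
    · exact Or.inl (Or.inl hs)
    · exact Or.inl (Or.inr hs)
    · exact Or.inr hs
  have hT3a : Commute (Y (2*n-4)) (Y (2*n-1)) := by
    refine cycRels_pair_extract φ ?_
    intro s hs
    apply mem1
    simp only [Hsimp, Set.mem_union]
    exact Or.inl (Or.inr (Or.inl (Or.inl hs)))
  have hT3b : Commute (Y (2*n-4)) (Y (2*n)) := by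
    refine cycRels_pair_extract φ ?_
    intro s hs
    apply mem1
    simp only [Hsimp, Set.mem_union]
    exact Or.inl (Or.inr (Or.inl (Or.inr hs)))
  have hT3c : Tri (Y (2*n-5)) (Y (2*n-1)) (Y (2*n)) := by
    refine cycRels_tri_extract φ ?_
    intro s hs
    apply mem1
    simp only [Hsimp, Set.mem_union]
    exact Or.inl (Or.inr (Or.inr hs))
  have hT4a : Commute (Y (2*n-2)) (Y (2*n)) := by
    refine cycRels_pair_extract φ ?_
    intro s hs
    apply mem1
    simp only [Hsimp, Set.mem_union]
    exact Or.inr (Or.inl (Or.inl hs))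
  have hT4b : Commute (Y (2*n-3)) (Y (2*n)) := by
    refine cycRels_pair_extract φ ?_
    intro s hs
    apply mem1
    simp only [Hsimp, Set.mem_union]
    exact Or.inr (Or.inl (Or.inr hs))
  have hT4c : Tri (Y (2*n-3)) (Y (2*n-2)) (Y (2*n-1)) := by
    refine cycRels_tri_extract φ ?_
    intro s hs
    apply mem1
    simp only [Hsimp, Set.mem_union]
    exact Or.inr (Or.inr hs)
  -- now kill the original relators
  rw [SetLike.mem_coe, ← QuotientGroup.eq_one_iff r]
  show φ r = 1
  simp only [Horig, Set.mem_union, Set.mem_iUnion, Set.mem_Icc] at hr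
  rcases hr with ((((⟨i, hi, (((h | h) | h) | h)⟩ | ⟨⟨i, j⟩, hp, (((h | h) | h) | h)⟩) |
    ((h | h) | h)) | ⟨i, hi, ((h | h) | h)⟩) | ((h | h) | h)) | ((h | h) | h)
  -- Q1
  · refine cycRels_pair φ ?_ r h
    exact hS1 i (2*i) (2*n-3) hi.1 hi.2 (Or.inr rfl) (Or.inl rfl)
  · refine cycRels_pair φ ?_ r h
    exact hS1 i (2*i-1) (2*n-3) hi.1 hi.2 (Or.inl rfl) (Or.inl rfl)
  · refine cycRels_pair φ ?_ r h
    simp only [map_mul, map_inv]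
    exact (commute_conjr_iff (hS1 i (2*i) (2*n-3) hi.1 hi.2 (Or.inr rfl) (Or.inl rfl))).2
      (hS1 i (2*i) (2*n-2) hi.1 hi.2 (Or.inr rfl) (Or.inr rfl))
  · refine cycRels_pair φ ?_ r h
    simp only [map_mul, map_inv]
    exact (commute_conjr_iff (hS1 i (2*i-1) (2*n-3) hi.1 hi.2 (Or.inl rfl) (Or.inl rfl))).2
      (hS1 i (2*i-1) (2*n-2) hi.1 hi.2 (Or.inl rfl) (Or.inr rfl))
  -- Q2
  · refine cycRels_pair φ ?_ r h
    simp only [map_mul, map_inv, dprod_map]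
    exact (coreA n hn Y hS1 hS2 hT2pack hT3c hT4a hT4b hT4c i j hp).1
  · refine cycRels_pair φ ?_ r h
    simp only [map_mul, map_inv, dprod_map]
    exact (coreA n hn Y hS1 hS2 hT2pack hT3c hT4a hT4b hT4c i j hp).2.1
  · refine cycRels_pair φ ?_ r h
    simp only [map_mul, map_inv, dprod_map]
    exact (coreA n hn Y hS1 hS2 hT2pack hT3c hT4a hT4b hT4c i j hp).2.2.1
  · refine cycRels_pair φ ?_ r h
    simp only [map_mul, map_inv, dprod_map]
    exact (coreA n hn Y hS1 hS2 hT2pack hT3c hT4a hT4b hT4c i j hp).2.2.2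
  -- T1
  · exact cycRels_pair φ hT1b r h
  · exact cycRels_pair φ hT1a r h
  · refine cycRels_tri φ ?_ r h
    simp only [map_mul, map_inv]
    exact (tri_conj_c_iff hT1a.symm hT1b.symm).2 hT1c
  -- T2
  · refine cycRels_tri φ ?_ r h
    simp only [map_mul, map_inv]
    exact (tri_conj_a_iff (hT2pack i hi.1 hi.2).2.1 (hT2pack i hi.1 hi.2).2.2).2
      (hT2pack i hi.1 hi.2).1
  · exact cycRels_pair φ (hT2pack i hi.1 hi.2).2.2 r h
  · exact cycRels_pair φ (hT2pack i hi.1 hi.2).2.1 r h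
  -- T3
  · refine cycRels_tri φ ?_ r h
    simp only [map_mul, map_inv]
    exact (tri_conj_a_iff ((tri_comm₁ hT4c).mul_left hT3a)
      ((hT4a.mul_left hT4b).mul_left hT3b)).2 hT3c
  · refine cycRels_pair φ ?_ r h
    simp only [map_mul, map_inv]
    refine (commute_conjr_iff ?_).2 hT3b
    exact (hS1 (n-2) (2*n-4) (2*n-2) (by omega) (by omega) (Or.inr (by omega))
      (Or.inr rfl)).mul_right
      (hS1 (n-2) (2*n-4) (2*n-3) (by omega) (by omega) (Or.inr (by omega)) (Or.inl rfl))
  · refine cycRels_pair φ ?_ r h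
    simp only [map_mul, map_inv]
    refine (commute_conjr_iff ?_).2 hT3a
    exact (hS1 (n-2) (2*n-4) (2*n-2) (by omega) (by omega) (Or.inr (by omega))
      (Or.inr rfl)).mul_right
      (hS1 (n-2) (2*n-4) (2*n-3) (by omega) (by omega) (Or.inr (by omega)) (Or.inl rfl))
  -- T4
  · exact cycRels_pair φ hT4a r h
  · exact cycRels_pair φ hT4b r h
  · exact cycRels_tri φ hT4c r h

lemma dirB (n : ℕ) (hn : 4 ≤ n) :
    Hsimp n ⊆ ↑(Subgroup.normalClosure (Horig n)) := by
  intro r hr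
  let φ : FreeGroup (Fin (2*n)) →* _ := QuotientGroup.mk' (Subgroup.normalClosure (Horig n))
  let Y : ℕ → _ := fun k => φ (gen (2*n) k)
  have mem1 : ∀ s ∈ Horig n, φ s = 1 := fun s hs =>
    (QuotientGroup.eq_one_iff s).2 (Subgroup.subset_normalClosure hs)
  -- extraction of the original relations
  have hO1 : ∀ m a, 2 ≤ m → m ≤ n-2 → (a = 2*m-1 ∨ a = 2*m) →
      Commute (Y a) (Y (2*n-3)) ∧
      Commute (Y a) ((Y (2*n-3))⁻¹ * Y (2*n-2) * Y (2*n-3)) := by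
    intro m a hm1 hm2 ha
    constructor
    · refine cycRels_pair_extract φ ?_
      intro s hs
      apply mem1
      simp only [Horig, Set.mem_union, Set.mem_iUnion]
      refine Or.inl (Or.inl (Or.inl (Or.inl (Or.inl ⟨m, Set.mem_Icc.2 ⟨hm1, hm2⟩, ?_⟩))))
      rcases ha with rfl | rfl
      · exact Or.inl (Or.inl (Or.inr hs))
      · exact Or.inl (Or.inl (Or.inl hs))
    · have hc : Commute (Y a)
          (φ ((gen (2*n) (2*n-3))⁻¹ * gen (2*n) (2*n-2) * gen (2*n) (2*n-3))) := by
        refine cycRels_pair_extract φ ?_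
        intro s hs
        apply mem1
        simp only [Horig, Set.mem_union, Set.mem_iUnion]
        refine Or.inl (Or.inl (Or.inl (Or.inl (Or.inl ⟨m, Set.mem_Icc.2 ⟨hm1, hm2⟩, ?_⟩))))
        rcases ha with rfl | rfl
        · exact Or.inr hs
        · exact Or.inl (Or.inr hs)
      simpa only [map_mul, map_inv] using hc
  have dQ1 : ∀ m a b, 2 ≤ m → m ≤ n-2 → (a = 2*m-1 ∨ a = 2*m) → (b = 2*n-3 ∨ b = 2*n-2) →
      Commute (Y a) (Y b) := by
    intro m a b hm1 hm2 ha hb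
    obtain ⟨c3, cc⟩ := hO1 m a hm1 hm2 ha
    rcases hb with rfl | rfl
    · exact c3
    · exact (commute_conjr_iff c3).1 cc
  have hT1a : Commute (Y 2) (Y (2*n-3)) := by
    refine cycRels_pair_extract φ ?_
    intro s hs
    apply mem1
    simp only [Horig, Set.mem_union]
    exact Or.inl (Or.inl (Or.inl (Or.inr (Or.inl (Or.inl hs)))))
  have hT1b : Commute (Y 1) (Y (2*n-3)) := by
    refine cycRels_pair_extract φ ?_
    intro s hs
    apply mem1
    simp only [Horig, Set.mem_union]
    exact Or.inl (Or.inl (Or.inl (Or.inr (Or.inl (Or.inr hs)))))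
  have hT1c : Tri (Y 1) (Y 2) ((Y (2*n-3))⁻¹ * Y (2*n-2) * Y (2*n-3)) := by
    have hc := cycRels_tri_extract φ (a := gen (2*n) 1) (b := gen (2*n) 2)
      (c := (gen (2*n) (2*n-3))⁻¹ * gen (2*n) (2*n-2) * gen (2*n) (2*n-3)) ?_
    · simpa only [map_mul, map_inv] using hc
    intro s hs
    apply mem1
    simp only [Horig, Set.mem_union]
    exact Or.inl (Or.inl (Or.inl (Or.inr (Or.inr hs))))
  have dT1c : Tri (Y 1) (Y 2) (Y (2*n-2)) :=
    (tri_conj_c_iff hT1b.symm hT1a.symm).1 hT1c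
  have dT2pack : ∀ i, 1 ≤ i → i ≤ n-3 →
      Tri (Y (2*i-1)) (Y (2*i+1)) (Y (2*i+2)) ∧ Commute (Y (2*i)) (Y (2*i+1)) ∧
        Commute (Y (2*i)) (Y (2*i+2)) := by
    intro i h1 h3
    have c1 : Commute (Y (2*i)) (Y (2*i+2)) := by
      refine cycRels_pair_extract φ ?_
      intro s hs
      apply mem1
      simp only [Horig, Set.mem_union, Set.mem_iUnion]
      exact Or.inl (Or.inl (Or.inr ⟨i, Set.mem_Icc.2 ⟨h1, h3⟩, Or.inl (Or.inr hs)⟩))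
    have c2 : Commute (Y (2*i)) (Y (2*i+1)) := by
      refine cycRels_pair_extract φ ?_
      intro s hs
      apply mem1
      simp only [Horig, Set.mem_union, Set.mem_iUnion]
      exact Or.inl (Or.inl (Or.inr ⟨i, Set.mem_Icc.2 ⟨h1, h3⟩, Or.inr hs⟩))
    have hc := cycRels_tri_extract φ
      (a := gen (2*n) (2*i) * gen (2*n) (2*i-1) * (gen (2*n) (2*i))⁻¹)
      (b := gen (2*n) (2*i+1)) (c := gen (2*n) (2*i+2)) ?_
    · have hc2 : Tri (Y (2*i) * Y (2*i-1) * (Y (2*i))⁻¹) (Y (2*i+1)) (Y (2*i+2)) := by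
        simpa only [map_mul, map_inv] using hc
      exact ⟨(tri_conj_a_iff c2 c1).1 hc2, c2, c1⟩
    intro s hs
    apply mem1
    simp only [Horig, Set.mem_union, Set.mem_iUnion]
    exact Or.inl (Or.inl (Or.inr ⟨i, Set.mem_Icc.2 ⟨h1, h3⟩, Or.inl (Or.inl hs)⟩))
  have hT4a : Commute (Y (2*n-2)) (Y (2*n)) := by
    refine cycRels_pair_extract φ ?_
    intro s hs
    apply mem1
    simp only [Horig, Set.mem_union]
    exact Or.inr (Or.inl (Or.inl hs))
  have hT4b : Commute (Y (2*n-3)) (Y (2*n)) := by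
    refine cycRels_pair_extract φ ?_
    intro s hs
    apply mem1
    simp only [Horig, Set.mem_union]
    exact Or.inr (Or.inl (Or.inr hs))
  have hT4c : Tri (Y (2*n-3)) (Y (2*n-2)) (Y (2*n-1)) := by
    refine cycRels_tri_extract φ ?_
    intro s hs
    apply mem1
    simp only [Horig, Set.mem_union]
    exact Or.inr (Or.inr hs)
  have hq24 : Commute (Y (2*n-4)) (Y (2*n-2) * Y (2*n-3)) :=
    (dQ1 (n-2) (2*n-4) (2*n-2) (by omega) (by omega) (Or.inr (by omega))
      (Or.inr rfl)).mul_right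
      (dQ1 (n-2) (2*n-4) (2*n-3) (by omega) (by omega) (Or.inr (by omega)) (Or.inl rfl))
  have dT3b : Commute (Y (2*n-4)) (Y (2*n)) := by
    have hc : Commute (Y (2*n-4))
        (φ ((gen (2*n) (2*n-2) * gen (2*n) (2*n-3))⁻¹ * gen (2*n) (2*n) *
          (gen (2*n) (2*n-2) * gen (2*n) (2*n-3)))) := by
      refine cycRels_pair_extract φ ?_
      intro s hs
      apply mem1
      simp only [Horig, Set.mem_union]
      exact Or.inl (Or.inr (Or.inl (Or.inr hs)))
    have hc2 : Commute (Y (2*n-4))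
        ((Y (2*n-2) * Y (2*n-3))⁻¹ * Y (2*n) * (Y (2*n-2) * Y (2*n-3))) := by
      simpa only [map_mul, map_inv] using hc
    exact (commute_conjr_iff hq24).1 hc2
  have dT3a : Commute (Y (2*n-4)) (Y (2*n-1)) := by
    have hc : Commute (Y (2*n-4))
        (φ ((gen (2*n) (2*n-2) * gen (2*n) (2*n-3))⁻¹ * gen (2*n) (2*n-1) *
          (gen (2*n) (2*n-2) * gen (2*n) (2*n-3)))) := by
      refine cycRels_pair_extract φ ?_
      intro s hs
      apply mem1
      simp only [Horig, Set.mem_union]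
      exact Or.inl (Or.inr (Or.inr hs))
    have hc2 : Commute (Y (2*n-4))
        ((Y (2*n-2) * Y (2*n-3))⁻¹ * Y (2*n-1) * (Y (2*n-2) * Y (2*n-3))) := by
      simpa only [map_mul, map_inv] using hc
    exact (commute_conjr_iff hq24).1 hc2
  have dT3c : Tri (Y (2*n-5)) (Y (2*n-1)) (Y (2*n)) := by
    have hc := cycRels_tri_extract φ
      (a := (gen (2*n) (2*n-2) * gen (2*n) (2*n-3) * gen (2*n) (2*n-4)) * gen (2*n) (2*n-5) *
        (gen (2*n) (2*n-2) * gen (2*n) (2*n-3) * gen (2*n) (2*n-4))⁻¹)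
      (b := gen (2*n) (2*n-1)) (c := gen (2*n) (2*n)) ?_
    · have hc2 : Tri ((Y (2*n-2) * Y (2*n-3) * Y (2*n-4)) * Y (2*n-5) *
          (Y (2*n-2) * Y (2*n-3) * Y (2*n-4))⁻¹) (Y (2*n-1)) (Y (2*n)) := by
        simpa only [map_mul, map_inv] using hc
      exact (tri_conj_a_iff ((tri_comm₁ hT4c).mul_left dT3a)
        ((hT4a.mul_left hT4b).mul_left dT3b)).1 hc2
    intro s hs
    apply mem1
    simp only [Horig, Set.mem_union]
    exact Or.inl (Or.inr (Or.inl (Or.inl hs)))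
  have hO2 : ∀ i j, (i,j) ∈ QIdx n →
      Commute (Y (2*i)) ((dprod Y (2*i+1) (2*j-1))⁻¹ * Y (2*j) * dprod Y (2*i+1) (2*j-1)) ∧
      Commute (Y (2*i-1)) ((dprod Y (2*i) (2*j-1))⁻¹ * Y (2*j) * dprod Y (2*i) (2*j-1)) ∧
      Commute (Y (2*i)) ((dprod Y (2*i+1) (2*j-2))⁻¹ * Y (2*j-1) * dprod Y (2*i+1) (2*j-2)) ∧
      Commute (Y (2*i-1)) ((dprod Y (2*i) (2*j-2))⁻¹ * Y (2*j-1) * dprod Y (2*i) (2*j-2)) := by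
    intro i j hp
    refine ⟨?_, ?_, ?_, ?_⟩
    · have hc := cycRels_pair_extract φ (a := gen (2*n) (2*i))
        (b := (dprod (gen (2*n)) (2*i+1) (2*j-1))⁻¹ * gen (2*n) (2*j) *
          dprod (gen (2*n)) (2*i+1) (2*j-1)) ?_
      · simpa only [map_mul, map_inv, dprod_map] using hc
      intro s hs
      apply mem1
      simp only [Horig, Set.mem_union, Set.mem_iUnion]
      exact Or.inl (Or.inl (Or.inl (Or.inl (Or.inr ⟨(i,j), hp, Or.inl (Or.inl (Or.inl hs))⟩))))
    · have hc := cycRels_pair_extract φ (a := gen (2*n) (2*i-1))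
        (b := (dprod (gen (2*n)) (2*i) (2*j-1))⁻¹ * gen (2*n) (2*j) *
          dprod (gen (2*n)) (2*i) (2*j-1)) ?_
      · simpa only [map_mul, map_inv, dprod_map] using hc
      intro s hs
      apply mem1
      simp only [Horig, Set.mem_union, Set.mem_iUnion]
      exact Or.inl (Or.inl (Or.inl (Or.inl (Or.inr ⟨(i,j), hp, Or.inl (Or.inl (Or.inr hs))⟩))))
    · have hc := cycRels_pair_extract φ (a := gen (2*n) (2*i))
        (b := (dprod (gen (2*n)) (2*i+1) (2*j-2))⁻¹ * gen (2*n) (2*j-1) *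
          dprod (gen (2*n)) (2*i+1) (2*j-2)) ?_
      · simpa only [map_mul, map_inv, dprod_map] using hc
      intro s hs
      apply mem1
      simp only [Horig, Set.mem_union, Set.mem_iUnion]
      exact Or.inl (Or.inl (Or.inl (Or.inl (Or.inr ⟨(i,j), hp, Or.inl (Or.inr hs)⟩))))
    · have hc := cycRels_pair_extract φ (a := gen (2*n) (2*i-1))
        (b := (dprod (gen (2*n)) (2*i) (2*j-2))⁻¹ * gen (2*n) (2*j-1) *
          dprod (gen (2*n)) (2*i) (2*j-2)) ?_
      · simpa only [map_mul, map_inv, dprod_map] using hc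
      intro s hs
      apply mem1
      simp only [Horig, Set.mem_union, Set.mem_iUnion]
      exact Or.inl (Or.inl (Or.inl (Or.inl (Or.inr ⟨(i,j), hp, Or.inr hs⟩))))
  have mainB := coreB n hn Y dQ1 dT2pack dT3c hT4a hT4b hT4c hO2
  -- now kill the simplified relators
  rw [SetLike.mem_coe, ← QuotientGroup.eq_one_iff r]
  show φ r = 1
  simp only [Hsimp, Set.mem_union, Set.mem_iUnion, Set.mem_Icc, Set.mem_insert_iff,
    Set.mem_singleton_iff] at hr
  rcases hr with ((((⟨m, hm, a, ha, b, hb, h⟩ | ⟨⟨i, j⟩, hp, a, ha, b, hb, h⟩) |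
    ((h | h) | h)) | ⟨i, hi, ((h | h) | h)⟩) | ((h | h) | h)) | ((h | h) | h)
  -- Q1'
  · exact cycRels_pair φ (dQ1 m a b hm.1 hm.2 ha hb) r h
  -- Q2'
  · obtain ⟨p3, p4, p1, p2⟩ := mainB j i hp
    rcases ha with rfl | rfl <;> rcases hb with rfl | rfl
    · exact cycRels_pair φ p4 r h
    · exact cycRels_pair φ p2 r h
    · exact cycRels_pair φ p3 r h
    · exact cycRels_pair φ p1 r h
  -- T1'
  · exact cycRels_pair φ hT1b r h
  · exact cycRels_pair φ hT1a r h
  · exact cycRels_tri φ dT1c r h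
  -- T2'
  · exact cycRels_tri φ (dT2pack i hi.1 hi.2).1 r h
  · exact cycRels_pair φ (dT2pack i hi.1 hi.2).2.1 r h
  · exact cycRels_pair φ (dT2pack i hi.1 hi.2).2.2 r h
  -- T3'
  · exact cycRels_pair φ dT3a r h
  · exact cycRels_pair φ dT3b r h
  · exact cycRels_tri φ dT3c r h
  -- T4'
  · exact cycRels_pair φ hT4a r h
  · exact cycRels_pair φ hT4b r h
  · exact cycRels_tri φ hT4c r h

/-- The normal closures of `H_orig(n)` and `H_simp(n)` in the free group on `x₁, …, x₂ₙ`
coincide, and consequently the identity on the generators induces an isomorphism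
`⟨x₁,…,x₂ₙ ∣ H_orig(n)⟩ ≃ ⟨x₁,…,x₂ₙ ∣ H_simp(n)⟩`. -/
theorem conjugation_free_cycle_length_n (n : ℕ) (hn : 4 ≤ n) :
    Subgroup.normalClosure (Horig n) = Subgroup.normalClosure (Hsimp n) ∧
    ∃ e : PresentedGroup (Horig n) ≃* PresentedGroup (Hsimp n),
      ∀ a : Fin (2 * n), e (PresentedGroup.of a) = PresentedGroup.of a := by
  have key : Subgroup.normalClosure (Horig n) = Subgroup.normalClosure (Hsimp n) :=
    le_antisymm (Subgroup.normalClosure_le_normal (dirA n hn))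
      (Subgroup.normalClosure_le_normal (dirB n hn))
  exact ⟨key, ⟨QuotientGroup.quotientMulEquivOfEq key, fun a => rfl⟩⟩
end

section
/- Let n ≥ 4 and let H(n) be the group presented by generators x_1,…,x_{2n} and relations H_orig(n). Then in H(n) the cyclic relation [x_1, x_2, x_{2n-2}] holds, i.e. x_{2n-2} x_2 x_1 = x_2 x_1 x_{2n-2} = x_1 x_{2n-2} x_2. -/
section Aux

variable {α : Type*} {rels : Set (FreeGroup α)}

lemma mk_eq_of_rel' {a b : FreeGroup α} (h : a * b⁻¹ ∈ rels) :
    PresentedGroup.mk rels a = PresentedGroup.mk rels b := by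
  have h1 : PresentedGroup.mk rels (a * b⁻¹) = 1 :=
    (QuotientGroup.eq_one_iff _).mpr (Subgroup.subset_normalClosure h)
  rw [map_mul, map_inv, mul_inv_eq_one] at h1
  exact h1

lemma comm_of_cycRels {a b : FreeGroup α} (h : cycRels [a, b] ⊆ rels) :
    PresentedGroup.mk rels a * PresentedGroup.mk rels b
      = PresentedGroup.mk rels b * PresentedGroup.mk rels a := by
  have := mk_eq_of_rel' (h (⟨1, by simp [List.rotate]⟩ : a * b * (b * a)⁻¹ ∈ cycRels [a, b]))
  simpa [map_mul] using this

lemma cyc3_1 {a b c : FreeGroup α} (h : cycRels [a, b, c] ⊆ rels) :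
    PresentedGroup.mk rels a * PresentedGroup.mk rels c * PresentedGroup.mk rels b
      = PresentedGroup.mk rels c * PresentedGroup.mk rels b * PresentedGroup.mk rels a := by
  have := mk_eq_of_rel'
    (h (⟨1, by simp [List.rotate, mul_assoc]⟩ : a * c * b * (c * b * a)⁻¹ ∈ cycRels [a, b, c]))
  simpa [map_mul] using this

lemma cyc3_2 {a b c : FreeGroup α} (h : cycRels [a, b, c] ⊆ rels) :
    PresentedGroup.mk rels b * PresentedGroup.mk rels a * PresentedGroup.mk rels c
      = PresentedGroup.mk rels c * PresentedGroup.mk rels b * PresentedGroup.mk rels a := by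
  have := mk_eq_of_rel'
    (h (⟨2, by simp [List.rotate, mul_assoc]⟩ : b * a * c * (c * b * a)⁻¹ ∈ cycRels [a, b, c]))
  simpa [map_mul] using this

lemma key_computation {G : Type*} [Group G] (a b t d : G)
    (ha : a * t = t * a) (hb : b * t = t * b)
    (h1 : t⁻¹ * d * t * b * a = b * a * (t⁻¹ * d * t))
    (h2 : a * (t⁻¹ * d * t) * b = t⁻¹ * d * t * b * a) :
    d * b * a = b * a * d ∧ b * a * d = a * d * b := by
  have hba : t * (b * a) * t⁻¹ = b * a := by
    rw [show t * (b * a) * t⁻¹ = t * b * a * t⁻¹ by group, ← hb, mul_assoc b, ← ha]; group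
  have e1 : d * (b * a) = b * a * d := by
    calc d * (b * a) = d * (t * (b * a) * t⁻¹) := by rw [hba]
      _ = t * (t⁻¹ * d * t * b * a) * t⁻¹ := by group
      _ = t * (b * a * (t⁻¹ * d * t)) * t⁻¹ := by rw [h1]
      _ = (t * (b * a) * t⁻¹) * d := by group
      _ = b * a * d := by rw [hba]
  have hat : t * a * t⁻¹ = a := by rw [← ha]; group
  have hbt : t * b * t⁻¹ = b := by rw [← hb]; group
  have e2 : b * a * d = a * d * b := by
    have h3 : a * (t⁻¹ * d * t) * b = b * a * (t⁻¹ * d * t) := h2.trans h1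
    calc b * a * d = (t * (b * a) * t⁻¹) * d := by rw [hba]
      _ = t * (b * a * (t⁻¹ * d * t)) * t⁻¹ := by group
      _ = t * (a * (t⁻¹ * d * t) * b) * t⁻¹ := by rw [h3]
      _ = (t * a * t⁻¹) * d * (t * b * t⁻¹) := by group
      _ = a * d * b := by rw [hat, hbt]
  exact ⟨by simpa [mul_assoc] using e1, e2⟩

end Aux

/-- In `H(n) = ⟨x₁,…,x₂ₙ ∣ H_orig(n)⟩` the cyclic relation `[x₁, x₂, x₂ₙ₋₂]` holds:
`x₂ₙ₋₂ x₂ x₁ = x₂ x₁ x₂ₙ₋₂ = x₁ x₂ₙ₋₂ x₂`. -/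
theorem T1_simplified (n : ℕ) (hn : 4 ≤ n) :
    genH n (2 * n - 2) * genH n 2 * genH n 1 = genH n 2 * genH n 1 * genH n (2 * n - 2) ∧
    genH n 2 * genH n 1 * genH n (2 * n - 2) = genH n 1 * genH n (2 * n - 2) * genH n 2 := by
  have hB : cycRels [gen (2*n) 2, gen (2*n) (2 * n - 3)] ⊆ Horig n := fun r hr =>
    Or.inl (Or.inl (Or.inl (Or.inr (Or.inl (Or.inl hr)))))
  have hA : cycRels [gen (2*n) 1, gen (2*n) (2 * n - 3)] ⊆ Horig n := fun r hr =>
    Or.inl (Or.inl (Or.inl (Or.inr (Or.inl (Or.inr hr)))))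
  have hC : cycRels [gen (2*n) 1, gen (2*n) 2,
      (gen (2*n) (2 * n - 3))⁻¹ * gen (2*n) (2 * n - 2) * gen (2*n) (2 * n - 3)] ⊆ Horig n :=
    fun r hr => Or.inl (Or.inl (Or.inl (Or.inr (Or.inr hr))))
  have ha := comm_of_cycRels hA
  have hb := comm_of_cycRels hB
  have h2 := cyc3_1 hC
  have h1 := (cyc3_2 hC).symm
  simp only [map_mul, map_inv] at h1 h2
  exact key_computation (genH n 1) (genH n 2) (genH n (2*n-3)) (genH n (2*n-2)) ha hb h1 h2
end

section
/- Let n ≥ 4 and let H(n) be the group presented by generators x_1,…,x_{2n} and relations H_orig(n). Then in H(n), for every 1 ≤ i ≤ n−3, the cyclic relation [x_{2i-1}, x_{2i+1}, x_{2i+2}] holds, i.e. x_{2i+2} x_{2i+1} x_{2i-1} = x_{2i+1} x_{2i-1} x_{2i+2} = x_{2i-1} x_{2i+2} x_{2i+1}. -/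
lemma cyc_eq {α : Type*} (rels : Set (FreeGroup α)) (l : List (FreeGroup α))
    (h : cycRels l ⊆ rels) (k : ℕ) :
    PresentedGroup.mk rels (l.rotate k).reverse.prod =
      PresentedGroup.mk rels l.reverse.prod := by
  have hm : (l.rotate k).reverse.prod * (l.reverse.prod)⁻¹ ∈
      Subgroup.normalClosure rels :=
    Subgroup.subset_normalClosure (h ⟨k, rfl⟩)
  have h2 : PresentedGroup.mk rels ((l.rotate k).reverse.prod * (l.reverse.prod)⁻¹) = 1 :=
    (QuotientGroup.eq_one_iff ((l.rotate k).reverse.prod * (l.reverse.prod)⁻¹)).mpr hm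
  rw [map_mul, map_inv, mul_inv_eq_one] at h2
  exact h2

/-- In `H(n) = ⟨x₁,…,x₂ₙ ∣ H_orig(n)⟩`, for every `1 ≤ i ≤ n-3` the cyclic relation
`[x₂ᵢ₋₁, x₂ᵢ₊₁, x₂ᵢ₊₂]` holds:
`x₂ᵢ₊₂ x₂ᵢ₊₁ x₂ᵢ₋₁ = x₂ᵢ₊₁ x₂ᵢ₋₁ x₂ᵢ₊₂ = x₂ᵢ₋₁ x₂ᵢ₊₂ x₂ᵢ₊₁`. -/
theorem T2_simplified (n : ℕ) (hn : 4 ≤ n) (i : ℕ) (hi : 1 ≤ i ∧ i ≤ n - 3) :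
    genH n (2 * i + 2) * genH n (2 * i + 1) * genH n (2 * i - 1) =
      genH n (2 * i + 1) * genH n (2 * i - 1) * genH n (2 * i + 2) ∧
    genH n (2 * i + 1) * genH n (2 * i - 1) * genH n (2 * i + 2) =
      genH n (2 * i - 1) * genH n (2 * i + 2) * genH n (2 * i + 1) := by
  set X : ℕ → FreeGroup (Fin (2 * n)) := gen (2 * n) with hX
  have hmem : i ∈ Set.Icc 1 (n - 3) := ⟨hi.1, hi.2⟩
  -- inclusion of the three T2 relator sets into Horig n
  have hT2 : (cycRels [X (2 * i) * X (2 * i - 1) * (X (2 * i))⁻¹, X (2 * i + 1), X (2 * i + 2)] ∪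
       cycRels [X (2 * i), X (2 * i + 2)] ∪ cycRels [X (2 * i), X (2 * i + 1)]) ⊆ Horig n := by
    intro r hr
    unfold Horig
    exact Set.mem_union_left _ (Set.mem_union_left _ (Set.mem_union_right _
      (Set.mem_biUnion hmem hr)))
  have h1sub : cycRels [X (2 * i) * X (2 * i - 1) * (X (2 * i))⁻¹, X (2 * i + 1), X (2 * i + 2)]
      ⊆ Horig n := fun r hr => hT2 (Set.mem_union_left _ (Set.mem_union_left _ hr))
  have h2sub : cycRels [X (2 * i), X (2 * i + 2)] ⊆ Horig n :=
    fun r hr => hT2 (Set.mem_union_left _ (Set.mem_union_right _ hr))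
  have h3sub : cycRels [X (2 * i), X (2 * i + 1)] ⊆ Horig n :=
    fun r hr => hT2 (Set.mem_union_right _ hr)
  set φ := PresentedGroup.mk (Horig n) with hφ
  set y := genH n (2 * i) with hy
  set z := genH n (2 * i - 1) with hz
  set u := genH n (2 * i + 1) with hu
  set v := genH n (2 * i + 2) with hv
  have hyz : φ (X (2 * i)) = y := rfl
  have hzz : φ (X (2 * i - 1)) = z := rfl
  have huz : φ (X (2 * i + 1)) = u := rfl
  have hvz : φ (X (2 * i + 2)) = v := rfl
  -- commutation y u
  have hcu : y * u = u * y := by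
    have := cyc_eq _ _ h3sub 1
    simp only [List.rotate, List.reverse, List.prod, map_mul] at this
    simp [List.rotate, hyz, huz] at this
    exact this
  have hcv : y * v = v * y := by
    have := cyc_eq _ _ h2sub 1
    simp [List.rotate, hyz, hvz] at this
    exact this
  have hA : (y * z * y⁻¹) * v * u = v * u * (y * z * y⁻¹) := by
    have := cyc_eq _ _ h1sub 1
    simp only [mul_assoc]
    simp [List.rotate, hyz, hzz, huz, hvz, map_mul, map_inv, mul_assoc] at this
    exact this
  have hB : u * (y * z * y⁻¹) * v = v * u * (y * z * y⁻¹) := by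
    have := cyc_eq _ _ h1sub 2
    simp only [mul_assoc]
    simp [List.rotate, hyz, hzz, huz, hvz, map_mul, map_inv, mul_assoc] at this
    exact this
  have h1b : u * (y * z * y⁻¹) * v * y = v * u * (y * z * y⁻¹) * y := by rw [hB]
  have h2 : u * y * z * v = v * u * y * z := by
    calc u * y * z * v = u * (y * z * y⁻¹) * (y * v) := by group
      _ = u * (y * z * y⁻¹) * (v * y) := by rw [hcv]
      _ = u * (y * z * y⁻¹) * v * y := by group
      _ = v * u * (y * z * y⁻¹) * y := h1b
      _ = v * u * y * z := by group
  have hB' : u * z * v = v * u * z := by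
    have h3 : y * (u * z * v) = y * (v * u * z) := by
      calc y * (u * z * v) = (y * u) * z * v := by group
        _ = (u * y) * z * v := by rw [hcu]
        _ = u * y * z * v := by group
        _ = v * u * y * z := h2
        _ = v * (u * y) * z := by group
        _ = v * (y * u) * z := by rw [← hcu]
        _ = (v * y) * (u * z) := by group
        _ = (y * v) * (u * z) := by rw [← hcv]
        _ = y * (v * u * z) := by group
    exact mul_left_cancel h3
  have h1a : (y * z * y⁻¹) * v * u * y = v * u * (y * z * y⁻¹) * y := by rw [hA]
  have hA' : z * v * u = v * u * z := by
    have h3 : y * (z * v * u) = y * (v * u * z) := by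
      calc y * (z * v * u) = (y * z * y⁻¹) * (y * v) * u := by group
        _ = (y * z * y⁻¹) * (v * y) * u := by rw [hcv]
        _ = (y * z * y⁻¹) * v * (y * u) := by group
        _ = (y * z * y⁻¹) * v * (u * y) := by rw [hcu]
        _ = (y * z * y⁻¹) * v * u * y := by group
        _ = v * u * (y * z * y⁻¹) * y := h1a
        _ = v * (u * y) * z := by group
        _ = v * (y * u) * z := by rw [← hcu]
        _ = (v * y) * (u * z) := by group
        _ = (y * v) * (u * z) := by rw [← hcv]
        _ = y * (v * u * z) := by group
    exact mul_left_cancel h3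
  exact ⟨hB'.symm, hB'.trans hA'.symm⟩
end

section
/- Let n ≥ 4 and let H(n) be the group presented by generators x_1,…,x_{2n} and relations H_orig(n). Then in H(n): x_{2n-4} x_{2n-1} = x_{2n-1} x_{2n-4}, x_{2n-4} x_{2n} = x_{2n} x_{2n-4}, and the cyclic relation [x_{2n-5}, x_{2n-1}, x_{2n}] holds, i.e. x_{2n} x_{2n-1} x_{2n-5} = x_{2n-1} x_{2n-5} x_{2n} = x_{2n-5} x_{2n} x_{2n-1}. -/
section Aux

variable {α : Type*}

lemma mk_eq_one {rels : Set (FreeGroup α)} {r : FreeGroup α} (h : r ∈ rels) :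
    PresentedGroup.mk rels r = 1 :=
  (QuotientGroup.eq_one_iff r).mpr (Subgroup.subset_normalClosure h)

lemma comm_of_rel {rels : Set (FreeGroup α)} {a b : FreeGroup α}
    (h : cycRels [a, b] ⊆ rels) :
    PresentedGroup.mk rels a * PresentedGroup.mk rels b
      = PresentedGroup.mk rels b * PresentedGroup.mk rels a := by
  have hm : a * b * (b * a)⁻¹ ∈ cycRels [a, b] := ⟨1, by simp [List.rotate]⟩
  have h1 := mk_eq_one (h hm)
  simp only [map_mul, map_inv] at h1
  exact mul_inv_eq_one.mp h1

lemma cyc3_of_rel {rels : Set (FreeGroup α)} {a b c : FreeGroup α}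
    (h : cycRels [a, b, c] ⊆ rels) :
    (PresentedGroup.mk rels a * PresentedGroup.mk rels c * PresentedGroup.mk rels b
      = PresentedGroup.mk rels c * PresentedGroup.mk rels b * PresentedGroup.mk rels a) ∧
    (PresentedGroup.mk rels b * PresentedGroup.mk rels a * PresentedGroup.mk rels c
      = PresentedGroup.mk rels c * PresentedGroup.mk rels b * PresentedGroup.mk rels a) := by
  constructor
  · have hm : a * c * b * (c * b * a)⁻¹ ∈ cycRels [a, b, c] :=
      ⟨1, by simp [List.rotate, mul_assoc]⟩
    have h1 := mk_eq_one (h hm)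
    simp only [map_mul, map_inv] at h1
    exact mul_inv_eq_one.mp h1
  · have hm : b * a * c * (c * b * a)⁻¹ ∈ cycRels [a, b, c] :=
      ⟨2, by simp [List.rotate, mul_assoc]⟩
    have h1 := mk_eq_one (h hm)
    simp only [map_mul, map_inv] at h1
    exact mul_inv_eq_one.mp h1

lemma conj_eq_of_comm {G : Type*} [Group G] {c x : G} (h : c * x = x * c) :
    c * x * c⁻¹ = x := by rw [h, mul_inv_cancel_right]

end Aux


/-- In `H(n) = ⟨x₁,…,x₂ₙ ∣ H_orig(n)⟩`: `x₂ₙ₋₄` commutes with `x₂ₙ₋₁` and with `x₂ₙ`, and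
the cyclic relation `[x₂ₙ₋₅, x₂ₙ₋₁, x₂ₙ]` holds:
`x₂ₙ x₂ₙ₋₁ x₂ₙ₋₅ = x₂ₙ₋₁ x₂ₙ₋₅ x₂ₙ = x₂ₙ₋₅ x₂ₙ x₂ₙ₋₁`. -/
theorem T3_simplified (n : ℕ) (hn : 4 ≤ n) :
    genH n (2 * n - 4) * genH n (2 * n - 1) = genH n (2 * n - 1) * genH n (2 * n - 4) ∧
    genH n (2 * n - 4) * genH n (2 * n) = genH n (2 * n) * genH n (2 * n - 4) ∧
    genH n (2 * n) * genH n (2 * n - 1) * genH n (2 * n - 5) =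
      genH n (2 * n - 1) * genH n (2 * n - 5) * genH n (2 * n) ∧
    genH n (2 * n - 1) * genH n (2 * n - 5) * genH n (2 * n) =
      genH n (2 * n - 5) * genH n (2 * n) * genH n (2 * n - 1) := by
  simp only [genH]
  set X : ℕ → FreeGroup (Fin (2 * n)) := gen (2 * n) with hX
  -- subset facts
  have sT4 : (cycRels [X (2 * n - 2), X (2 * n)] ∪ cycRels [X (2 * n - 3), X (2 * n)] ∪
      cycRels [X (2 * n - 3), X (2 * n - 2), X (2 * n - 1)]) ⊆ Horig n :=
    Set.subset_union_right
  have sT3 : (cycRels [(X (2 * n - 2) * X (2 * n - 3) * X (2 * n - 4)) * X (2 * n - 5) *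
        (X (2 * n - 2) * X (2 * n - 3) * X (2 * n - 4))⁻¹, X (2 * n - 1), X (2 * n)] ∪
      cycRels [X (2 * n - 4),
        (X (2 * n - 2) * X (2 * n - 3))⁻¹ * X (2 * n) * (X (2 * n - 2) * X (2 * n - 3))] ∪
      cycRels [X (2 * n - 4),
        (X (2 * n - 2) * X (2 * n - 3))⁻¹ * X (2 * n - 1) * (X (2 * n - 2) * X (2 * n - 3))]) ⊆
      Horig n :=
    Set.subset_union_right.trans Set.subset_union_left
  -- relations
  have h1 :=
    comm_of_rel ((Set.subset_union_left.trans Set.subset_union_left).trans sT4)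
  have h2 :=
    comm_of_rel ((Set.subset_union_right.trans Set.subset_union_left).trans sT4)
  have h3 := (cyc3_of_rel (Set.subset_union_right.trans sT4)).2
  -- h3 : y2 * y3 * y1 = y1 * y2 * y3
  have h4 := comm_of_rel ((Set.subset_union_right.trans Set.subset_union_left).trans sT3)
  have h5 := comm_of_rel (Set.subset_union_right.trans sT3)
  have h6 := cyc3_of_rel ((Set.subset_union_left.trans Set.subset_union_left).trans sT3)
  simp only [map_mul, map_inv] at h4 h5 h6
  set y5 := PresentedGroup.mk (Horig n) (X (2 * n - 5)) with hy5
  set y4 := PresentedGroup.mk (Horig n) (X (2 * n - 4)) with hy4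
  set y3 := PresentedGroup.mk (Horig n) (X (2 * n - 3)) with hy3
  set y2 := PresentedGroup.mk (Horig n) (X (2 * n - 2)) with hy2
  set y1 := PresentedGroup.mk (Horig n) (X (2 * n - 1)) with hy1
  set y0 := PresentedGroup.mk (Horig n) (X (2 * n)) with hy0
  -- d = y2*y3 commutes with y0 and y1
  have hd0 : y2 * y3 * y0 = y0 * (y2 * y3) := by
    rw [mul_assoc, h2, ← mul_assoc, h1, mul_assoc]
  have hd1 : y2 * y3 * y1 = y1 * (y2 * y3) := by rw [← mul_assoc]; exact h3
  have hq0 : (y2 * y3)⁻¹ * y0 * (y2 * y3) = y0 := by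
    rw [mul_assoc, ← hd0, ← mul_assoc, inv_mul_cancel, one_mul]
  have hq1 : (y2 * y3)⁻¹ * y1 * (y2 * y3) = y1 := by
    rw [mul_assoc, ← hd1, ← mul_assoc, inv_mul_cancel, one_mul]
  rw [hq0] at h4
  rw [hq1] at h5
  -- h4 : y4 * y0 = y0 * y4, h5 : y4 * y1 = y1 * y4
  refine ⟨h5, h4, ?_, ?_⟩
  · -- cc commutes with y0 and y1
    have hc0 : y2 * y3 * y4 * y0 = y0 * (y2 * y3 * y4) := by
      rw [mul_assoc, h4, ← mul_assoc, hd0, mul_assoc]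
    have hc1 : y2 * y3 * y4 * y1 = y1 * (y2 * y3 * y4) := by
      rw [mul_assoc, h5, ← mul_assoc, hd1, mul_assoc]
    have k0 := conj_eq_of_comm hc0
    have k1 := conj_eq_of_comm hc1
    set cc := y2 * y3 * y4 with hcc
    -- h6.2 : y1 * (cc*y5*cc⁻¹) * y0 = y0 * y1 * (cc*y5*cc⁻¹)
    have e : cc * (y1 * y5 * y0) * cc⁻¹ = cc * (y0 * y1 * y5) * cc⁻¹ := by
      calc cc * (y1 * y5 * y0) * cc⁻¹
          = (cc * y1 * cc⁻¹) * (cc * y5 * cc⁻¹) * (cc * y0 * cc⁻¹) := by group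
        _ = y1 * (cc * y5 * cc⁻¹) * y0 := by rw [k0, k1]
        _ = y0 * y1 * (cc * y5 * cc⁻¹) := h6.2
        _ = (cc * y0 * cc⁻¹) * (cc * y1 * cc⁻¹) * (cc * y5 * cc⁻¹) := by rw [k0, k1]
        _ = cc * (y0 * y1 * y5) * cc⁻¹ := by group
    have e' : y1 * y5 * y0 = y0 * y1 * y5 := mul_left_cancel (mul_right_cancel e)
    exact e'.symm
  · have hc0 : y2 * y3 * y4 * y0 = y0 * (y2 * y3 * y4) := by
      rw [mul_assoc, h4, ← mul_assoc, hd0, mul_assoc]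
    have hc1 : y2 * y3 * y4 * y1 = y1 * (y2 * y3 * y4) := by
      rw [mul_assoc, h5, ← mul_assoc, hd1, mul_assoc]
    have k0 := conj_eq_of_comm hc0
    have k1 := conj_eq_of_comm hc1
    set cc := y2 * y3 * y4 with hcc
    have e : cc * (y1 * y5 * y0) * cc⁻¹ = cc * (y0 * y1 * y5) * cc⁻¹ := by
      calc cc * (y1 * y5 * y0) * cc⁻¹
          = (cc * y1 * cc⁻¹) * (cc * y5 * cc⁻¹) * (cc * y0 * cc⁻¹) := by group
        _ = y1 * (cc * y5 * cc⁻¹) * y0 := by rw [k0, k1]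
        _ = y0 * y1 * (cc * y5 * cc⁻¹) := h6.2
        _ = (cc * y0 * cc⁻¹) * (cc * y1 * cc⁻¹) * (cc * y5 * cc⁻¹) := by rw [k0, k1]
        _ = cc * (y0 * y1 * y5) * cc⁻¹ := by group
    have e' : y1 * y5 * y0 = y0 * y1 * y5 := mul_left_cancel (mul_right_cancel e)
    have f : cc * (y5 * y0 * y1) * cc⁻¹ = cc * (y0 * y1 * y5) * cc⁻¹ := by
      calc cc * (y5 * y0 * y1) * cc⁻¹
          = (cc * y5 * cc⁻¹) * (cc * y0 * cc⁻¹) * (cc * y1 * cc⁻¹) := by group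
        _ = (cc * y5 * cc⁻¹) * y0 * y1 := by rw [k0, k1]
        _ = y0 * y1 * (cc * y5 * cc⁻¹) := h6.1
        _ = (cc * y0 * cc⁻¹) * (cc * y1 * cc⁻¹) * (cc * y5 * cc⁻¹) := by rw [k0, k1]
        _ = cc * (y0 * y1 * y5) * cc⁻¹ := by group
    have f' : y5 * y0 * y1 = y0 * y1 * y5 := mul_left_cancel (mul_right_cancel f)
    exact e'.trans f'.symm
end

section
/- Let n ≥ 4 and let H(n) be the group presented by generators x_1,…,x_{2n} and relations H_orig(n). Then in H(n), each of x_{2n-7} and x_{2n-6} commutes with each of x_{2n-1} and x_{2n} (this is the simplification of the conjugated Q2 relations for the pair of indices i = n−3, j = n). -/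
section Aux

variable {G : Type*} [Group G]

private lemma conj_id {g x : G} (h : Commute g x) : g⁻¹ * x * g = x := by
  rw [h.inv_left.eq]; simp [mul_assoc]

private lemma strip {a g x : G} (hg : Commute a g) (h : Commute a (g⁻¹ * x * g)) :
    Commute a x := by
  have h2 : Commute a (g * ((g⁻¹ * x * g) * g⁻¹)) := hg.mul_right (h.mul_right hg.inv_right)
  simpa [mul_assoc] using h2

private lemma strip' {g x y : G} (hg : Commute g y) (h : Commute (g * x * g⁻¹) y) :
    Commute x y := by
  have h2 : Commute (g⁻¹ * ((g * x * g⁻¹) * g)) y := hg.inv_left.mul_left (h.mul_left hg)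
  simpa [mul_assoc] using h2

private lemma comm_conj {a w x : G} (h : Commute a (w⁻¹ * x * w)) : Commute (w * a * w⁻¹) x := by
  have h2 : w * (a * (w⁻¹ * x * w)) * w⁻¹ = w * ((w⁻¹ * x * w) * a) * w⁻¹ := by rw [h.eq]
  show (w * a * w⁻¹) * x = x * (w * a * w⁻¹)
  simpa [mul_assoc] using h2

private lemma comm_conj' {a w x : G} (h : Commute (w * a * w⁻¹) x) : Commute a (w⁻¹ * x * w) := by
  have h2 : w⁻¹ * ((w * a * w⁻¹) * x) * w = w⁻¹ * (x * (w * a * w⁻¹)) * w := by rw [h.eq]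
  show a * (w⁻¹ * x * w) = (w⁻¹ * x * w) * a
  simpa [mul_assoc] using h2

private lemma mem_cyc2 (A B : G) : A * B * (B * A)⁻¹ ∈ cycRels [A, B] :=
  ⟨1, by simp [List.rotate]⟩

private lemma mem_cyc3_1 (A B C : G) : A * C * B * (C * B * A)⁻¹ ∈ cycRels [A, B, C] :=
  ⟨1, by simp [List.rotate, mul_assoc]⟩

private lemma mem_cyc3_2 (A B C : G) : B * A * C * (C * B * A)⁻¹ ∈ cycRels [A, B, C] :=
  ⟨2, by simp [List.rotate, mul_assoc]⟩

private lemma dp_eq4 {M : Type*} [Monoid M] (X : ℕ → M) (a : ℕ) :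
    dprod X a (a + 3) = X (a + 3) * X (a + 2) * X (a + 1) * X a := by
  show ((List.range' a (a + 3 + 1 - a)).reverse.map X).prod = _
  rw [show a + 3 + 1 - a = 4 from by omega]
  simp [List.range', mul_assoc]

private lemma dp_eq5 {M : Type*} [Monoid M] (X : ℕ → M) (a : ℕ) :
    dprod X a (a + 4) = X (a + 4) * X (a + 3) * X (a + 2) * X (a + 1) * X a := by
  show ((List.range' a (a + 4 + 1 - a)).reverse.map X).prod = _
  rw [show a + 4 + 1 - a = 5 from by omega]
  simp [List.range', mul_assoc]

private lemma dp_eq6 {M : Type*} [Monoid M] (X : ℕ → M) (a : ℕ) :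
    dprod X a (a + 5) = X (a + 5) * X (a + 4) * X (a + 3) * X (a + 2) * X (a + 1) * X a := by
  show ((List.range' a (a + 5 + 1 - a)).reverse.map X).prod = _
  rw [show a + 5 + 1 - a = 6 from by omega]
  simp [List.range', mul_assoc]

end Aux

section HorigAux

variable {n : ℕ}

private lemma T4_sub :
    (cycRels [gen (2*n) (2 * n - 2), gen (2*n) (2 * n)] ∪
     cycRels [gen (2*n) (2 * n - 3), gen (2*n) (2 * n)] ∪
     cycRels [gen (2*n) (2 * n - 3), gen (2*n) (2 * n - 2), gen (2*n) (2 * n - 1)]) ⊆ Horig n :=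
  fun _ hr => Or.inr hr

private lemma T3_sub :
    (cycRels [(gen (2*n) (2 * n - 2) * gen (2*n) (2 * n - 3) * gen (2*n) (2 * n - 4)) *
        gen (2*n) (2 * n - 5) *
        (gen (2*n) (2 * n - 2) * gen (2*n) (2 * n - 3) * gen (2*n) (2 * n - 4))⁻¹,
        gen (2*n) (2 * n - 1), gen (2*n) (2 * n)] ∪
     cycRels [gen (2*n) (2 * n - 4),
        (gen (2*n) (2 * n - 2) * gen (2*n) (2 * n - 3))⁻¹ * gen (2*n) (2 * n) *
          (gen (2*n) (2 * n - 2) * gen (2*n) (2 * n - 3))] ∪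
     cycRels [gen (2*n) (2 * n - 4),
        (gen (2*n) (2 * n - 2) * gen (2*n) (2 * n - 3))⁻¹ * gen (2*n) (2 * n - 1) *
          (gen (2*n) (2 * n - 2) * gen (2*n) (2 * n - 3))]) ⊆ Horig n :=
  fun _ hr => Or.inl (Or.inr hr)

private lemma T2_sub {i : ℕ} (hi : i ∈ Set.Icc 1 (n - 3)) :
    (cycRels [gen (2*n) (2 * i) * gen (2*n) (2 * i - 1) * (gen (2*n) (2 * i))⁻¹,
        gen (2*n) (2 * i + 1), gen (2*n) (2 * i + 2)] ∪
     cycRels [gen (2*n) (2 * i), gen (2*n) (2 * i + 2)] ∪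
     cycRels [gen (2*n) (2 * i), gen (2*n) (2 * i + 1)]) ⊆ Horig n :=
  fun _ hr => Or.inl (Or.inl (Or.inr (Set.mem_biUnion hi hr)))

private lemma Q2_sub {p : ℕ × ℕ} (hp : p ∈ QIdx n) :
    (cycRels [gen (2*n) (2 * p.1),
          (dprod (gen (2*n)) (2 * p.1 + 1) (2 * p.2 - 1))⁻¹ * gen (2*n) (2 * p.2) *
            dprod (gen (2*n)) (2 * p.1 + 1) (2 * p.2 - 1)] ∪
       cycRels [gen (2*n) (2 * p.1 - 1),
          (dprod (gen (2*n)) (2 * p.1) (2 * p.2 - 1))⁻¹ * gen (2*n) (2 * p.2) *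
            dprod (gen (2*n)) (2 * p.1) (2 * p.2 - 1)] ∪
       cycRels [gen (2*n) (2 * p.1),
          (dprod (gen (2*n)) (2 * p.1 + 1) (2 * p.2 - 2))⁻¹ * gen (2*n) (2 * p.2 - 1) *
            dprod (gen (2*n)) (2 * p.1 + 1) (2 * p.2 - 2)] ∪
       cycRels [gen (2*n) (2 * p.1 - 1),
          (dprod (gen (2*n)) (2 * p.1) (2 * p.2 - 2))⁻¹ * gen (2*n) (2 * p.2 - 1) *
            dprod (gen (2*n)) (2 * p.1) (2 * p.2 - 2)]) ⊆ Horig n :=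
  fun _ hr => Or.inl (Or.inl (Or.inl (Or.inl (Or.inr (Set.mem_biUnion hp hr)))))

private lemma rel_one {r : FreeGroup (Fin (2*n))} (h : r ∈ Horig n) :
    PresentedGroup.mk (Horig n) r = 1 :=
  (QuotientGroup.eq_one_iff r).mpr (Subgroup.subset_normalClosure h)

private lemma pair_comm' {A B : FreeGroup (Fin (2*n))} (h : cycRels [A, B] ⊆ Horig n) :
    Commute (PresentedGroup.mk (Horig n) A) (PresentedGroup.mk (Horig n) B) := by
  have h1 := rel_one (h (mem_cyc2 A B))
  simp only [map_mul, map_inv] at h1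
  exact mul_inv_eq_one.mp h1

private lemma trip1' {A B C : FreeGroup (Fin (2*n))} (h : cycRels [A, B, C] ⊆ Horig n) :
    PresentedGroup.mk (Horig n) A * PresentedGroup.mk (Horig n) C * PresentedGroup.mk (Horig n) B
      = PresentedGroup.mk (Horig n) C * PresentedGroup.mk (Horig n) B *
        PresentedGroup.mk (Horig n) A := by
  have h1 := rel_one (h (mem_cyc3_1 A B C))
  simp only [map_mul, map_inv] at h1
  exact mul_inv_eq_one.mp h1

private lemma trip2' {A B C : FreeGroup (Fin (2*n))} (h : cycRels [A, B, C] ⊆ Horig n) :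
    PresentedGroup.mk (Horig n) B * PresentedGroup.mk (Horig n) A * PresentedGroup.mk (Horig n) C
      = PresentedGroup.mk (Horig n) C * PresentedGroup.mk (Horig n) B *
        PresentedGroup.mk (Horig n) A := by
  have h1 := rel_one (h (mem_cyc3_2 A B C))
  simp only [map_mul, map_inv] at h1
  exact mul_inv_eq_one.mp h1

end HorigAux

private lemma abstract_main {G : Type*} [Group G] (a1 a2 e d p q t z : G)
    (h_pz : Commute p z) (h_qz : Commute q z)
    (h_qpt0 : q * p * t = t * q * p)
    (h_dz0 : Commute d ((q * p)⁻¹ * z * (q * p)))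
    (h_dt0 : Commute d ((q * p)⁻¹ * t * (q * p)))
    (h_a2d : Commute a2 d) (h_a2e : Commute a2 e)
    (h6 : a2 * a1 * a2⁻¹ * d * e = d * e * (a2 * a1 * a2⁻¹))
    (R1 : Commute a2 ((t * q * p * d * e)⁻¹ * z * (t * q * p * d * e)))
    (R2 : Commute a1 ((t * q * p * d * e * a2)⁻¹ * z * (t * q * p * d * e * a2)))
    (R3 : Commute a2 ((q * p * d * e)⁻¹ * t * (q * p * d * e)))
    (R4 : Commute a1 ((q * p * d * e * a2)⁻¹ * t * (q * p * d * e * a2))) :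
    (Commute a1 t ∧ Commute a1 z) ∧ Commute a2 t ∧ Commute a2 z := by
  have h_qpt : Commute (q * p) t := by
    show q * p * t = t * (q * p)
    rw [← mul_assoc]; exact h_qpt0
  have h_qp_z : Commute (q * p) z := h_qz.mul_left h_pz
  have h_dz : Commute d z := by rwa [conj_id h_qp_z] at h_dz0
  have h_dt : Commute d t := by rwa [conj_id h_qpt] at h_dt0
  -- step 1 : a2 commutes with t
  have s3 : (q * p * d * e)⁻¹ * t * (q * p * d * e)
      = e⁻¹ * (d⁻¹ * ((q * p)⁻¹ * t * (q * p)) * d) * e := by group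
  rw [s3, conj_id h_qpt, conj_id h_dt] at R3
  have h_a2t : Commute a2 t := strip h_a2e R3
  -- step 2 : a2 commutes with z
  have c1 : Commute (q * p) (t⁻¹ * z * t) := (h_qpt.inv_right.mul_right h_qp_z).mul_right h_qpt
  have c2 : Commute d (t⁻¹ * z * t) := (h_dt.inv_right.mul_right h_dz).mul_right h_dt
  have s1 : (t * q * p * d * e)⁻¹ * z * (t * q * p * d * e)
      = e⁻¹ * (d⁻¹ * ((q * p)⁻¹ * (t⁻¹ * z * t) * (q * p)) * d) * e := by group
  rw [s1, conj_id c1, conj_id c2] at R1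
  have h_a2z : Commute a2 z := strip h_a2t (strip h_a2e R1)
  -- key identity from the T2 triple
  have hkey : d * e * (a2 * a1 * a2⁻¹) * e⁻¹ * d⁻¹ = a2 * a1 * a2⁻¹ := by
    rw [← h6]; group
  -- step 3 : a1 commutes with t
  have E1 : (q * p * d * e * a2) * a1 * (q * p * d * e * a2)⁻¹
      = (q * p) * (a2 * a1 * a2⁻¹) * (q * p)⁻¹ := by
    rw [← hkey]; group
  have R4' := comm_conj R4
  rw [E1] at R4'
  have hct : Commute (a2 * a1 * a2⁻¹) t := strip' h_qpt R4'
  have h_a1t : Commute a1 t := strip' h_a2t hct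
  -- step 4 : a1 commutes with z
  have E2 : (t * q * p * d * e * a2) * a1 * (t * q * p * d * e * a2)⁻¹
      = t * ((q * p) * (a2 * a1 * a2⁻¹) * (q * p)⁻¹) * t⁻¹ := by
    rw [← hkey]; group
  have R2' := comm_conj R2
  rw [E2] at R2'
  have R2'' := comm_conj' R2'
  have hcz : Commute (a2 * a1 * a2⁻¹) z := strip hct (strip' c1 R2'')
  have h_a1z : Commute a1 z := strip' h_a2z hcz
  exact ⟨⟨h_a1t, h_a1z⟩, h_a2t, h_a2z⟩

/-- In `H(n) = ⟨x₁,…,x₂ₙ ∣ H_orig(n)⟩`, each of `x₂ₙ₋₇, x₂ₙ₋₆` commutes with each of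
`x₂ₙ₋₁, x₂ₙ` (the simplification of the conjugated Q2 relations for `i = n-3`, `j = n`). -/
theorem Q2_last_simplified (n : ℕ) (hn : 4 ≤ n) :
    ∀ a ∈ ({2 * n - 7, 2 * n - 6} : Set ℕ), ∀ b ∈ ({2 * n - 1, 2 * n} : Set ℕ),
      genH n a * genH n b = genH n b * genH n a := by
  obtain ⟨m, rfl⟩ : ∃ m, n = m + 4 := ⟨n - 4, by omega⟩
  -- canonical generators
  -- relations from T4
  have h_qz := pair_comm' (n := m+4) (fun _ hr => T4_sub (Or.inl (Or.inl hr)))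
  have h_pz := pair_comm' (n := m+4) (fun _ hr => T4_sub (Or.inl (Or.inr hr)))
  have h_qpt0 := trip2' (n := m+4) (fun _ hr => T4_sub (Or.inr hr))
  -- relations from T3
  have h_dz0 := pair_comm' (n := m+4) (fun _ hr => T3_sub (Or.inl (Or.inr hr)))
  have h_dt0 := pair_comm' (n := m+4) (fun _ hr => T3_sub (Or.inr hr))
  simp only [map_mul, map_inv] at h_dz0 h_dt0
  -- relations from T2 with i = m+1
  have hT2 := T2_sub (n := m+4) (i := m+1) (by rw [Set.mem_Icc]; omega)
  rw [show 2*(m+1)+2 = 2*(m+4)-4 from by omega, show 2*(m+1)+1 = 2*(m+4)-5 from by omega,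
      show 2*(m+1)-1 = 2*(m+4)-7 from by omega, show 2*(m+1) = 2*(m+4)-6 from by omega] at hT2
  have h6 := trip1' (fun _ hr => hT2 (Or.inl (Or.inl hr)))
  have h_a2d := pair_comm' (fun _ hr => hT2 (Or.inl (Or.inr hr)))
  have h_a2e := pair_comm' (fun _ hr => hT2 (Or.inr hr))
  simp only [map_mul, map_inv] at h6
  -- relations from Q2 with p = (m+1, m+4)
  have hp : ((m+1, m+4) : ℕ × ℕ) ∈ QIdx (m+4) := by
    refine ⟨by omega, by omega, by omega, by omega, by omega, by omega, ?_⟩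
    simp only [ne_eq, Prod.mk.injEq, not_and]
    omega
  have hQ2 := Q2_sub hp
  dsimp only at hQ2
  rw [show 2*(m+1)+1 = 2*(m+4)-5 from by omega, show 2*(m+1)-1 = 2*(m+4)-7 from by omega,
      show 2*(m+1) = 2*(m+4)-6 from by omega] at hQ2
  have W1 : dprod (gen (2*(m+4))) (2*(m+4)-5) (2*(m+4)-1)
      = gen (2*(m+4)) (2*(m+4)-1) * gen (2*(m+4)) (2*(m+4)-2) * gen (2*(m+4)) (2*(m+4)-3) *
        gen (2*(m+4)) (2*(m+4)-4) * gen (2*(m+4)) (2*(m+4)-5) := by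
    rw [show (2*(m+4):ℕ)-1 = (2*(m+4)-5)+4 from by omega, dp_eq5,
        show (2*(m+4):ℕ)-5+3 = 2*(m+4)-2 from by omega,
        show (2*(m+4):ℕ)-5+2 = 2*(m+4)-3 from by omega,
        show (2*(m+4):ℕ)-5+1 = 2*(m+4)-4 from by omega]
  have W2 : dprod (gen (2*(m+4))) (2*(m+4)-6) (2*(m+4)-1)
      = gen (2*(m+4)) (2*(m+4)-1) * gen (2*(m+4)) (2*(m+4)-2) * gen (2*(m+4)) (2*(m+4)-3) *
        gen (2*(m+4)) (2*(m+4)-4) * gen (2*(m+4)) (2*(m+4)-5) * gen (2*(m+4)) (2*(m+4)-6) := by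
    rw [show (2*(m+4):ℕ)-1 = (2*(m+4)-6)+5 from by omega, dp_eq6,
        show (2*(m+4):ℕ)-6+4 = 2*(m+4)-2 from by omega,
        show (2*(m+4):ℕ)-6+3 = 2*(m+4)-3 from by omega,
        show (2*(m+4):ℕ)-6+2 = 2*(m+4)-4 from by omega,
        show (2*(m+4):ℕ)-6+1 = 2*(m+4)-5 from by omega]
  have W3 : dprod (gen (2*(m+4))) (2*(m+4)-5) (2*(m+4)-2)
      = gen (2*(m+4)) (2*(m+4)-2) * gen (2*(m+4)) (2*(m+4)-3) *
        gen (2*(m+4)) (2*(m+4)-4) * gen (2*(m+4)) (2*(m+4)-5) := by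
    rw [show (2*(m+4):ℕ)-2 = (2*(m+4)-5)+3 from by omega, dp_eq4,
        show (2*(m+4):ℕ)-5+2 = 2*(m+4)-3 from by omega,
        show (2*(m+4):ℕ)-5+1 = 2*(m+4)-4 from by omega]
  have W4 : dprod (gen (2*(m+4))) (2*(m+4)-6) (2*(m+4)-2)
      = gen (2*(m+4)) (2*(m+4)-2) * gen (2*(m+4)) (2*(m+4)-3) * gen (2*(m+4)) (2*(m+4)-4) *
        gen (2*(m+4)) (2*(m+4)-5) * gen (2*(m+4)) (2*(m+4)-6) := by
    rw [show (2*(m+4):ℕ)-2 = (2*(m+4)-6)+4 from by omega, dp_eq5,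
        show (2*(m+4):ℕ)-6+3 = 2*(m+4)-3 from by omega,
        show (2*(m+4):ℕ)-6+2 = 2*(m+4)-4 from by omega,
        show (2*(m+4):ℕ)-6+1 = 2*(m+4)-5 from by omega]
  rw [W1, W2, W3, W4] at hQ2
  have R1 := pair_comm' (fun _ hr => hQ2 (Or.inl (Or.inl (Or.inl hr))))
  have R2 := pair_comm' (fun _ hr => hQ2 (Or.inl (Or.inl (Or.inr hr))))
  have R3 := pair_comm' (fun _ hr => hQ2 (Or.inl (Or.inr hr)))
  have R4 := pair_comm' (fun _ hr => hQ2 (Or.inr hr))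
  simp only [map_mul, map_inv] at R1 R2 R3 R4
  have main := abstract_main _ _ _ _ _ _ _ _ h_pz h_qz h_qpt0 h_dz0 h_dt0 h_a2d h_a2e h6
    R1 R2 R3 R4
  intro a ha b hb
  have ha' : a = 2*(m+4)-7 ∨ a = 2*(m+4)-6 := ha
  have hb' : b = 2*(m+4)-1 ∨ b = 2*(m+4) := hb
  obtain rfl | rfl := ha' <;> obtain rfl | rfl := hb'
  · exact main.1.1
  · exact main.1.2
  · exact main.2.1
  · exact main.2.2
end
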